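/- arXiv:1410.0859 — 5 statements merged into one kernel-verified Lean document; each statement's English description precedes it below -/
import Mathlib

section
/- Let R be a commutative ring, s ∈ R an invertible element, and A an associative R-algebra. Let P : ℤ² → A be a function, and for x, y ∈ ℤ² write d(x,y) := x₁y₂ − x₂y₁; say that the pair (x,y) satisfies relation (∗) if the ring commutator [P(x), P(y)] := P(x)P(y) − P(y)P(x) equals {d(x,y)}·P(x+y), where {d} := s^d − s^{−d}. Suppose a, b, x, y ∈ ℤ² are such that a + b = x, the element {d(a,b)} is invertible in R, the pair (a,b) satisfies (∗), and the four pairs (y,a), (y,b), (y+a, b), (y+b, a) all satisfy (∗). Then the pair (x,y) satisfies (∗). -/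
/-- `{d} := s^d - s^{-d}` for an invertible element `s` of a commutative ring. -/
def brace {R : Type*} [CommRing R] (s : Rˣ) (d : ℤ) : R :=
  ((s ^ d : Rˣ) : R) - ((s ^ (-d) : Rˣ) : R)

/-- The determinant `d(x,y) = x₁ y₂ − x₂ y₁` of the matrix with columns `x, y ∈ ℤ²`. -/
def ddet (x y : ℤ × ℤ) : ℤ := x.1 * y.2 - x.2 * y.1

/-- The pair `(x, y)` satisfies relation (∗): `[P(x),P(y)] = {d(x,y)}·P(x+y)`. -/
def SatRel {R : Type*} [CommRing R] {A : Type*} [Ring A] [Algebra R A]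
    (s : Rˣ) (P : ℤ × ℤ → A) (x y : ℤ × ℤ) : Prop :=
  P x * P y - P y * P x = brace s (ddet x y) • P (x + y)

lemma e_mul {R : Type*} [CommRing R] (s : Rˣ) (p q : ℤ) :
    ((s ^ p : Rˣ) : R) * ((s ^ q : Rˣ) : R) = ((s ^ (p+q) : Rˣ) : R) := by
  rw [← Units.val_mul, ← zpow_add]

lemma brace_key {R : Type*} [CommRing R] (s : Rˣ) (D m n : ℤ) :
    brace s n * brace s (m - D) - brace s m * brace s (n + D)
      = brace s D * brace s (-(m+n)) := by
  simp only [brace, sub_mul, mul_sub, e_mul]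
  ring_nf

lemma ddet_add_left (u v w : ℤ × ℤ) : ddet (u + v) w = ddet u w + ddet v w := by
  simp [ddet, Prod.fst_add, Prod.snd_add]; ring

lemma ddet_comm (u v : ℤ × ℤ) : ddet u v = -ddet v u := by simp [ddet]; ring

theorem stmt_0 {R : Type*} [CommRing R] {A : Type*} [Ring A] [Algebra R A]
    (s : Rˣ) (P : ℤ × ℤ → A) (a b x y : ℤ × ℤ)
    (hab : a + b = x)
    (hunit : IsUnit (brace s (ddet a b)))
    (hab_rel : SatRel s P a b)
    (hya : SatRel s P y a)
    (hyb : SatRel s P y b)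
    (hyab : SatRel s P (y + a) b)
    (hyba : SatRel s P (y + b) a) :
    SatRel s P x y := by
  subst hab
  unfold SatRel at *
  set m := ddet y a with hm
  set n := ddet y b with hn
  set D := ddet a b with hD
  have hmn : ddet (a + b) y = -(m + n) := by
    rw [ddet_add_left, ddet_comm a y, ddet_comm b y]; ring
  have hnD : ddet (y + a) b = n + D := by rw [ddet_add_left]
  have hmD : ddet (y + b) a = m - D := by
    rw [ddet_add_left, ddet_comm b a]; ring
  rw [hnD] at hyab
  rw [hmD] at hyba
  rw [hmn]
  rw [← hunit.smul_left_cancel]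
  have h1 : P y * P a = P a * P y + brace s m • P (y + a) :=
    by linear_combination (norm := noncomm_ring) hya
  have h2 : P y * P b = P b * P y + brace s n • P (y + b) :=
    by linear_combination (norm := noncomm_ring) hyb
  have h3 : P (y + a) * P b = P b * P (y + a) + brace s (n + D) • P (y + a + b) :=
    by linear_combination (norm := noncomm_ring) hyab
  have h4 : P (y + b) * P a = P a * P (y + b) + brace s (m - D) • P (y + b + a) :=
    by linear_combination (norm := noncomm_ring) hyba
  have E1 : P y * (P a * P b) = P a * P b * P y + brace s n • (P a * P (y + b))
      + brace s m • (P b * P (y + a)) + (brace s m * brace s (n + D)) • P (y + a + b) := by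
    rw [← mul_assoc, h1, add_mul, mul_assoc, h2, smul_mul_assoc, h3, mul_add, smul_add,
      mul_smul_comm, smul_smul]
    noncomm_ring
  have E2 : P y * (P b * P a) = P b * P a * P y + brace s m • (P b * P (y + a))
      + brace s n • (P a * P (y + b)) + (brace s n * brace s (m - D)) • P (y + b + a) := by
    rw [← mul_assoc, h2, add_mul, mul_assoc, h1, smul_mul_assoc, h4, mul_add, smul_add,
      mul_smul_comm, smul_smul]
    noncomm_ring
  have hre : y + a + b = a + b + y := by abel
  have hre2 : y + b + a = a + b + y := by abel
  rw [hre] at E1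
  rw [hre2] at E2
  calc brace s D • (P (a + b) * P y - P y * P (a + b))
      = (brace s D • P (a + b)) * P y - P y * (brace s D • P (a + b)) := by
        rw [smul_sub, smul_mul_assoc, mul_smul_comm]
    _ = (P a * P b - P b * P a) * P y - P y * (P a * P b - P b * P a) := by rw [← hab_rel]
    _ = (P a * P b) * P y - (P b * P a) * P y - P y * (P a * P b) + P y * (P b * P a) := by
        noncomm_ring
    _ = (brace s n * brace s (m - D) - brace s m * brace s (n + D)) • P (a + b + y) := by
        rw [E1, E2, sub_smul]; noncomm_ring
    _ = brace s D • brace s (-(m + n)) • P (a + b + y) := by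
        rw [brace_key, mul_smul]
end

section
/- Let R be a commutative ring containing an invertible element s such that s^k − s^{−k} is invertible in R for every nonzero integer k, and let A be an associative R-algebra. Write {d} := s^d − s^{−d}. Let P : ℤ² → A be a function such that: (i) for every γ ∈ SL₂(ℤ) there is an R-algebra automorphism φ_γ of A with φ_γ(P(x)) = P(γ·x) for all x ∈ ℤ²; (ii) there is an R-algebra anti-automorphism σ of A with σ(P(a,b)) = P(a,−b) for all (a,b) ∈ ℤ²; (iii) [P(k·x), P(j·x)] = 0 for all x ∈ ℤ² and all j, k ∈ ℤ; (iv) [P(1,0), P(−1,k)] = {k}·P(0,k) for all k ∈ ℤ; (v) [P(1,0), P(0,k)] = {k}·P(1,k) for all k ∈ ℤ. Then for all x, y ∈ ℤ², [P(x), P(y)] = {d(x,y)}·P(x+y), where d(x,y) := x₁y₂ − x₂y₁. -/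
section Aux

variable {R : Type*} [CommRing R] {A : Type*} [Ring A] [Algebra R A]

lemma brace_zero (s : Rˣ) : brace s 0 = 0 := by simp [brace]

lemma brace_neg (s : Rˣ) (d : ℤ) : brace s (-d) = - brace s d := by simp [brace]

private lemma key_identity (s : Rˣ) (e a b : ℤ) :
    brace s b * brace s (e + a) - brace s a * brace s (b - e)
      = brace s e * brace s (a + b) := by
  have h : ∀ m n : ℤ, ((s ^ (m + n) : Rˣ) : R) = ((s ^ m : Rˣ) : R) * ((s ^ n : Rˣ) : R) := by
    intro m n; rw [zpow_add]; rfl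
  simp only [brace, neg_add, sub_eq_add_neg, neg_neg, h]
  ring

/-- The target relation. -/
def Trel (s : Rˣ) (P : ℤ × ℤ → A) (x y : ℤ × ℤ) : Prop :=
  P x * P y - P y * P x = brace s (x.1 * y.2 - x.2 * y.1) • P (x + y)

lemma trel_congr {s : Rˣ} {P : ℤ × ℤ → A} {x x' y y' : ℤ × ℤ}
    (hx : x = x') (hy : y = y') (h : Trel s P x y) : Trel s P x' y' := hx ▸ hy ▸ h

lemma Trel.swap {s : Rˣ} {P : ℤ × ℤ → A} {x y : ℤ × ℤ} (h : Trel s P x y) :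
    Trel s P y x := by
  unfold Trel at h ⊢
  have h2 : P y * P x - P x * P y = - (brace s (x.1 * y.2 - x.2 * y.1) • P (x + y)) := by
    rw [← neg_sub (P x * P y) (P y * P x), h]
  rw [h2, ← neg_smul, ← brace_neg, add_comm y x]
  congr 2
  ring

lemma exists_prim (x : ℤ × ℤ) (hx : x ≠ 0) :
    ∃ m : ℤ, ∃ z : ℤ × ℤ, 1 ≤ m ∧ IsCoprime z.1 z.2 ∧ x = m • z := by
  have hg : 0 < Int.gcd x.1 x.2 := by
    apply Int.gcd_pos_iff.mpr
    by_contra hcon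
    push_neg at hcon
    exact hx (Prod.ext hcon.1 hcon.2)
  refine ⟨(Int.gcd x.1 x.2 : ℤ), (x.1 / (Int.gcd x.1 x.2 : ℤ), x.2 / (Int.gcd x.1 x.2 : ℤ)),
    by exact_mod_cast hg, ?_, ?_⟩
  · exact Int.isCoprime_iff_gcd_eq_one.mpr (Int.gcd_div_gcd_div_gcd hg)
  · have h1 := Int.ediv_mul_cancel (Int.gcd_dvd_left (a := x.1) (b := x.2))
    have h2 := Int.ediv_mul_cancel (Int.gcd_dvd_right (a := x.1) (b := x.2))
    ext
    · simp only [Prod.smul_fst, smul_eq_mul]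
      rw [mul_comm]; exact h1.symm
    · simp only [Prod.smul_snd, smul_eq_mul]
      rw [mul_comm]; exact h2.symm

lemma exists_parallel (x y : ℤ × ℤ) (h : x.1 * y.2 - x.2 * y.1 = 0) :
    ∃ z : ℤ × ℤ, ∃ j k : ℤ, x = k • z ∧ y = j • z := by
  by_cases hx : x = 0
  · exact ⟨y, 1, 0, by simp [hx], by simp⟩
  · obtain ⟨m, z, hm, hcop, hxz⟩ := exists_prim x hx
    obtain ⟨g, g', hbez⟩ := hcop
    have hx1 : x.1 = m * z.1 := by rw [hxz]; simp [smul_eq_mul]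
    have hx2 : x.2 = m * z.2 := by rw [hxz]; simp [smul_eq_mul]
    have hdetz : z.1 * y.2 - z.2 * y.1 = 0 := by
      have hm0 : m ≠ 0 := by omega
      have : m * (z.1 * y.2 - z.2 * y.1) = 0 := by rw [hx1, hx2] at h; linarith
      exact (mul_eq_zero.mp this).resolve_left hm0
    refine ⟨z, g * y.1 + g' * y.2, m, hxz, ?_⟩
    have e1 : y.1 = (g * y.1 + g' * y.2) * z.1 := by linear_combination (-y.1) * hbez - g' * hdetz
    have e2 : y.2 = (g * y.1 + g' * y.2) * z.2 := by linear_combination (-y.2) * hbez + g * hdetz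
    ext
    · simp only [Prod.smul_fst, smul_eq_mul]
      exact e1
    · simp only [Prod.smul_snd, smul_eq_mul]
      exact e2

end Aux

section Main

variable {R : Type*} [CommRing R] {A : Type*} [Ring A] [Algebra R A] {s : Rˣ} {P : ℤ × ℤ → A}

lemma trel_parallel
    (hpar : ∀ x : ℤ × ℤ, ∀ j k : ℤ,
        P (k • x) * P (j • x) - P (j • x) * P (k • x) = 0)
    {x y : ℤ × ℤ} (h : x.1 * y.2 - x.2 * y.1 = 0) : Trel s P x y := by
  obtain ⟨z, j, k, hx, hy⟩ := exists_parallel x y h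
  unfold Trel
  rw [h, brace_zero, zero_smul, hx, hy]
  exact hpar z j k

lemma trel_transport
    (hSL : ∀ a b c d : ℤ, a * d - b * c = 1 → ∃ φ : A ≃ₐ[R] A,
        ∀ x : ℤ × ℤ, φ (P x) = P (a * x.1 + b * x.2, c * x.1 + d * x.2))
    {a b c d : ℤ} (h : a * d - b * c = 1) {x y : ℤ × ℤ} (hxy : Trel s P x y) :
    Trel s P (a * x.1 + b * x.2, c * x.1 + d * x.2) (a * y.1 + b * y.2, c * y.1 + d * y.2) := by
  obtain ⟨φ, hφ⟩ := hSL a b c d h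
  unfold Trel at hxy ⊢
  have := congrArg φ hxy
  rw [map_sub, map_mul, map_mul, map_smul, hφ, hφ, hφ] at this
  convert this using 3
  · dsimp only
    linear_combination (x.1 * y.2 - x.2 * y.1) * h
  · ext <;> simp <;> ring

lemma trel_reflect
    (hanti : ∃ σ : A ≃ₗ[R] A, σ 1 = 1 ∧ (∀ u w : A, σ (u * w) = σ w * σ u) ∧
        ∀ a b : ℤ, σ (P (a, b)) = P (a, -b))
    {x y : ℤ × ℤ} (hxy : Trel s P x y) :
    Trel s P (y.1, -y.2) (x.1, -x.2) := by
  obtain ⟨σ, -, hmul, hP⟩ := hanti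
  unfold Trel at hxy ⊢
  have := congrArg σ hxy
  rw [map_sub, hmul, hmul, map_smul] at this
  have hx : σ (P x) = P (x.1, -x.2) := by rw [← hP x.1 x.2]
  have hy : σ (P y) = P (y.1, -y.2) := by rw [← hP y.1 y.2]
  have hxy2 : σ (P (x + y)) = P ((x+y).1, -(x+y).2) := by rw [← hP (x+y).1 (x+y).2]
  rw [hx, hy, hxy2] at this
  convert this using 3
  · ring
  · ext <;> simp [add_comm]

lemma jacobi_step (hinv : ∀ k : ℤ, k ≠ 0 → IsUnit (brace s k))
    {u v y : ℤ × ℤ} (he : u.1 * v.2 - u.2 * v.1 ≠ 0)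
    (Tuv : Trel s P u v) (Tuy : Trel s P u y) (Tvy : Trel s P v y)
    (Tuvy : Trel s P u (v + y)) (Tvuy : Trel s P v (u + y)) :
    Trel s P (u + v) y := by
  unfold Trel at *
  set e : ℤ := u.1 * v.2 - u.2 * v.1 with hedef
  set a : ℤ := u.1 * y.2 - u.2 * y.1 with hadef
  set b : ℤ := v.1 * y.2 - v.2 * y.1 with hbdef
  have hdet1 : u.1 * (v + y).2 - u.2 * (v + y).1 = e + a := by
    simp only [Prod.fst_add, Prod.snd_add, hedef, hadef]; ring
  have hdet2 : v.1 * (u + y).2 - v.2 * (u + y).1 = b - e := by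
    simp only [Prod.fst_add, Prod.snd_add, hedef, hbdef]; ring
  have hdet3 : (u + v).1 * y.2 - (u + v).2 * y.1 = a + b := by
    simp only [Prod.fst_add, Prod.snd_add, hadef, hbdef]; ring
  have hsum : v + (u + y) = u + (v + y) := by ring
  have hsum2 : u + (v + y) = (u + v) + y := by ring
  rw [hdet1, hsum2] at Tuvy
  rw [hdet2, hsum, hsum2] at Tvuy
  rw [hdet3]
  apply (IsUnit.smul_left_cancel (hinv e he)).mp
  calc brace s e • (P (u + v) * P y - P y * P (u + v))
      = (brace s e • P (u + v)) * P y - P y * (brace s e • P (u + v)) := by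
        rw [smul_sub, smul_mul_assoc, mul_smul_comm]
    _ = (P u * P v - P v * P u) * P y - P y * (P u * P v - P v * P u) := by rw [← Tuv]
    _ = (P u * (P v * P y - P y * P v) - (P v * P y - P y * P v) * P u)
        - (P v * (P u * P y - P y * P u) - (P u * P y - P y * P u) * P v) := by noncomm_ring
    _ = (P u * (brace s b • P (v + y)) - (brace s b • P (v + y)) * P u)
        - (P v * (brace s a • P (u + y)) - (brace s a • P (u + y)) * P v) := by rw [Tvy, Tuy]
    _ = brace s b • (P u * P (v + y) - P (v + y) * P u)
        - brace s a • (P v * P (u + y) - P (u + y) * P v) := by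
        rw [mul_smul_comm, smul_mul_assoc, mul_smul_comm, smul_mul_assoc, smul_sub, smul_sub]
    _ = brace s b • (brace s (e + a) • P ((u + v) + y))
        - brace s a • (brace s (b - e) • P ((u + v) + y)) := by rw [Tuvy, Tvuy]
    _ = (brace s b * brace s (e + a) - brace s a * brace s (b - e)) • P ((u + v) + y) := by
        rw [smul_smul, smul_smul, sub_smul]
    _ = brace s e • (brace s (a + b) • P ((u + v) + y)) := by
        rw [key_identity, smul_smul]

lemma trel_shift
    (hSL : ∀ a b c d : ℤ, a * d - b * c = 1 → ∃ φ : A ≃ₐ[R] A,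
        ∀ x : ℤ × ℤ, φ (P x) = P (a * x.1 + b * x.2, c * x.1 + d * x.2))
    {m p q : ℤ} (t : ℤ) (h : Trel s P (m, 0) (p, q)) : Trel s P (m, 0) (p + t * q, q) := by
  have := trel_transport hSL (show (1:ℤ) * 1 - t * 0 = 1 by ring) h
  exact trel_congr (by norm_num) (by norm_num) this

end Main

section Main2

variable {R : Type*} [CommRing R] {A : Type*} [Ring A] [Algebra R A] {s : Rˣ} {P : ℤ × ℤ → A}

lemma primPos (hinv : ∀ k : ℤ, k ≠ 0 → IsUnit (brace s k))
    (hSL : ∀ a b c d : ℤ, a * d - b * c = 1 → ∃ φ : A ≃ₐ[R] A,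
        ∀ x : ℤ × ℤ, φ (P x) = P (a * x.1 + b * x.2, c * x.1 + d * x.2))
    (hrel1 : ∀ k : ℤ,
        P (1, 0) * P (-1, k) - P (-1, k) * P (1, 0) = brace s k • P (0, k))
    (hrel2 : ∀ k : ℤ,
        P (1, 0) * P (0, k) - P (0, k) * P (1, 0) = brace s k • P (1, k))
    (N : ℕ) (hlt : ∀ x y : ℤ × ℤ, (x.1 * y.2 - x.2 * y.1).natAbs < N → Trel s P x y)
    (p q : ℤ) (hq : 1 ≤ q) (hqN : q ≤ (N : ℤ)) : Trel s P ((1 : ℤ), (0 : ℤ)) (p, q) := by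
  set r := p % q with hrdef
  set t := p / q with htdef
  have hpr : p = r + t * q := by
    have := Int.emod_add_mul_ediv p q
    rw [hrdef, htdef]; linarith [this]
  have hr0 : 0 ≤ r := Int.emod_nonneg p (by omega)
  have hrq : r < q := Int.emod_lt_of_pos p (by omega)
  rcases eq_or_ne r 0 with h0 | h0
  · -- r = 0 : from hrel2
    have b0 : Trel s P ((1 : ℤ), (0 : ℤ)) ((0 : ℤ), q) := by
      unfold Trel
      simpa using hrel2 q
    refine trel_congr rfl ?_ (trel_shift hSL t b0)
    ext
    · show (0 : ℤ) + t * q = p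
      omega
    · rfl
  · rcases eq_or_ne r (q - 1) with h1 | h1
    · -- r = q - 1 : from hrel1
      have b1 : Trel s P ((1 : ℤ), (0 : ℤ)) ((-1 : ℤ), q) := by
        unfold Trel
        simpa using hrel1 q
      refine trel_congr rfl ?_ (trel_shift hSL (t + 1) b1)
      ext
      · show (-1 : ℤ) + (t + 1) * q = p
        have : (t + 1) * q = t * q + q := by ring
        omega
      · rfl
    · -- 1 ≤ r ≤ q - 2, so q ≥ 3
      have hr1 : 1 ≤ r := by omega
      have hr2 : r ≤ q - 2 := by omega
      have hq3 : 3 ≤ q := by omega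
      have Tuv : Trel s P ((r, q - 1) : ℤ × ℤ) ((0, 1) : ℤ × ℤ) := by
        apply hlt; simp only; omega
      have Tuy : Trel s P ((r, q - 1) : ℤ × ℤ) ((1, 0) : ℤ × ℤ) := by
        apply hlt; simp only; omega
      have Tvy : Trel s P ((0, 1) : ℤ × ℤ) ((1, 0) : ℤ × ℤ) := by
        apply hlt; simp only; omega
      have Tuvy : Trel s P ((r, q - 1) : ℤ × ℤ) (((0, 1) : ℤ × ℤ) + ((1, 0) : ℤ × ℤ)) := by
        apply hlt; simp only [Prod.fst_add, Prod.snd_add]; omega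
      have Tvuy : Trel s P ((0, 1) : ℤ × ℤ) (((r, q - 1) : ℤ × ℤ) + ((1, 0) : ℤ × ℤ)) := by
        apply hlt; simp only [Prod.fst_add, Prod.snd_add]; omega
      have he : ((r, q - 1) : ℤ × ℤ).1 * ((0, 1) : ℤ × ℤ).2
          - ((r, q - 1) : ℤ × ℤ).2 * ((0, 1) : ℤ × ℤ).1 ≠ 0 := by
        simp only; omega
      have J := jacobi_step hinv he Tuv Tuy Tvy Tuvy Tvuy
      have J' : Trel s P (r, q) ((1 : ℤ), (0 : ℤ)) :=
        trel_congr (by ext <;> simp) rfl J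
      refine trel_congr rfl ?_ (trel_shift hSL t J'.swap)
      ext
      · show r + t * q = p
        omega
      · rfl

end Main2
section Main3

variable {R : Type*} [CommRing R] {A : Type*} [Ring A] [Algebra R A] {s : Rˣ} {P : ℤ × ℤ → A}

lemma prim (hinv : ∀ k : ℤ, k ≠ 0 → IsUnit (brace s k))
    (hSL : ∀ a b c d : ℤ, a * d - b * c = 1 → ∃ φ : A ≃ₐ[R] A,
        ∀ x : ℤ × ℤ, φ (P x) = P (a * x.1 + b * x.2, c * x.1 + d * x.2))
    (hanti : ∃ σ : A ≃ₗ[R] A, σ 1 = 1 ∧ (∀ u w : A, σ (u * w) = σ w * σ u) ∧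
        ∀ a b : ℤ, σ (P (a, b)) = P (a, -b))
    (hpar : ∀ x : ℤ × ℤ, ∀ j k : ℤ,
        P (k • x) * P (j • x) - P (j • x) * P (k • x) = 0)
    (hrel1 : ∀ k : ℤ,
        P (1, 0) * P (-1, k) - P (-1, k) * P (1, 0) = brace s k • P (0, k))
    (hrel2 : ∀ k : ℤ,
        P (1, 0) * P (0, k) - P (0, k) * P (1, 0) = brace s k • P (1, k))
    (N : ℕ) (hlt : ∀ x y : ℤ × ℤ, (x.1 * y.2 - x.2 * y.1).natAbs < N → Trel s P x y)
    (p q : ℤ) (hqN : q.natAbs ≤ N) : Trel s P ((1 : ℤ), (0 : ℤ)) (p, q) := by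
  rcases lt_trichotomy q 0 with hq | hq | hq
  · have C := primPos hinv hSL hrel1 hrel2 N hlt p (-q) (by omega) (by omega)
    have Rf := trel_reflect hanti C.swap
    exact trel_congr (by norm_num) (by norm_num) Rf
  · apply trel_parallel hpar
    simp [hq]
  · exact primPos hinv hSL hrel1 hrel2 N hlt p q (by omega) (by omega)

lemma prim2 (hinv : ∀ k : ℤ, k ≠ 0 → IsUnit (brace s k))
    (hSL : ∀ a b c d : ℤ, a * d - b * c = 1 → ∃ φ : A ≃ₐ[R] A,
        ∀ x : ℤ × ℤ, φ (P x) = P (a * x.1 + b * x.2, c * x.1 + d * x.2))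
    (hanti : ∃ σ : A ≃ₗ[R] A, σ 1 = 1 ∧ (∀ u w : A, σ (u * w) = σ w * σ u) ∧
        ∀ a b : ℤ, σ (P (a, b)) = P (a, -b))
    (hpar : ∀ x : ℤ × ℤ, ∀ j k : ℤ,
        P (k • x) * P (j • x) - P (j • x) * P (k • x) = 0)
    (hrel1 : ∀ k : ℤ,
        P (1, 0) * P (-1, k) - P (-1, k) * P (1, 0) = brace s k • P (0, k))
    (hrel2 : ∀ k : ℤ,
        P (1, 0) * P (0, k) - P (0, k) * P (1, 0) = brace s k • P (1, k))
    (N : ℕ) (hlt : ∀ x y : ℤ × ℤ, (x.1 * y.2 - x.2 * y.1).natAbs < N → Trel s P x y)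
    (x y : ℤ × ℤ) (hcop : IsCoprime x.1 x.2)
    (hN : (x.1 * y.2 - x.2 * y.1).natAbs ≤ N) : Trel s P x y := by
  obtain ⟨g, g', hbez⟩ := hcop
  have h1 : Trel s P ((1 : ℤ), (0 : ℤ)) (g * y.1 + g' * y.2, -x.2 * y.1 + x.1 * y.2) := by
    apply prim hinv hSL hanti hpar hrel1 hrel2 N hlt
    have e : -x.2 * y.1 + x.1 * y.2 = x.1 * y.2 - x.2 * y.1 := by ring
    rw [e]; exact hN
  have h2 := trel_transport hSL
    (show x.1 * g - (-g') * x.2 = 1 by linear_combination hbez) h1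
  refine trel_congr ?_ ?_ h2
  · ext <;> simp
  · ext
    · show x.1 * (g * y.1 + g' * y.2) + -g' * (-x.2 * y.1 + x.1 * y.2) = y.1
      linear_combination y.1 * hbez
    · show x.2 * (g * y.1 + g' * y.2) + g * (-x.2 * y.1 + x.1 * y.2) = y.2
      linear_combination y.2 * hbez

end Main3
section Main4

variable {R : Type*} [CommRing R] {A : Type*} [Ring A] [Algebra R A] {s : Rˣ} {P : ℤ × ℤ → A}

lemma core (hinv : ∀ k : ℤ, k ≠ 0 → IsUnit (brace s k))
    (hSL : ∀ a b c d : ℤ, a * d - b * c = 1 → ∃ φ : A ≃ₐ[R] A,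
        ∀ x : ℤ × ℤ, φ (P x) = P (a * x.1 + b * x.2, c * x.1 + d * x.2))
    (hanti : ∃ σ : A ≃ₗ[R] A, σ 1 = 1 ∧ (∀ u w : A, σ (u * w) = σ w * σ u) ∧
        ∀ a b : ℤ, σ (P (a, b)) = P (a, -b))
    (hpar : ∀ x : ℤ × ℤ, ∀ j k : ℤ,
        P (k • x) * P (j • x) - P (j • x) * P (k • x) = 0)
    (hrel1 : ∀ k : ℤ,
        P (1, 0) * P (-1, k) - P (-1, k) * P (1, 0) = brace s k • P (0, k))
    (hrel2 : ∀ k : ℤ,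
        P (1, 0) * P (0, k) - P (0, k) * P (1, 0) = brace s k • P (1, k))
    (N : ℕ) (hlt : ∀ x y : ℤ × ℤ, (x.1 * y.2 - x.2 * y.1).natAbs < N → Trel s P x y)
    (m p q : ℤ) (hm : 1 ≤ m) (hq : 1 ≤ q) (hN : m * q ≤ (N : ℤ)) :
    Trel s P (m, (0 : ℤ)) (p, q) := by
  rcases eq_or_lt_of_le hm with hm1 | hm2
  · -- m = 1
    rw [← hm1]
    apply prim hinv hSL hanti hpar hrel1 hrel2 N hlt
    rw [← hm1] at hN
    omega
  · -- 2 ≤ m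
    have hm2' : 2 ≤ m := hm2
    rcases eq_or_lt_of_le hq with hq1 | hq2
    · -- q = 1
      rw [← hq1]
      have B := prim2 hinv hSL hanti hpar hrel1 hrel2 N hlt (p, (1 : ℤ)) (m, (0 : ℤ))
        (isCoprime_one_right) ?_
      · exact B.swap
      · show (p * 0 - 1 * m).natAbs ≤ N
        rw [← hq1] at hN
        have : p * 0 - 1 * m = -m := by ring
        rw [this]; omega
    · -- 2 ≤ q
      have hq2' : 2 ≤ q := hq2
      set p' : ℤ := (p + 1) % q - 1 with hp'def
      set t : ℤ := (p + 1) / q with htdef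
      have hmod := Int.emod_add_mul_ediv (p + 1) q
      have hcm : q * ((p + 1) / q) = ((p + 1) / q) * q := mul_comm _ _
      have hp : p = p' + t * q := by rw [hp'def, htdef]; linarith [hmod, hcm]
      have hp'1 : -1 ≤ p' := by
        have := Int.emod_nonneg (p + 1) (show q ≠ 0 by omega)
        omega
      have hp'2 : p' ≤ q - 2 := by
        have := Int.emod_lt_of_pos (p + 1) (show 0 < q by omega)
        omega
      -- nonlinear facts for omega
      have f1 : (m - 1) * q = m * q - q := by ring
      have f2 : (m - 2) * (q - 1) = m * q - m - 2 * q + 2 := by ring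
      have f1' : (m - 1) * (-1 + q) = m * q - m - q + 1 := by ring
      have f3 : 2 * q ≤ m * q := by
        have := mul_le_mul_of_nonneg_right hm2' (show (0:ℤ) ≤ q by omega)
        linarith
      have f4 : 2 * m ≤ m * q := by
        have := mul_le_mul_of_nonneg_left hq2' (show (0:ℤ) ≤ m by omega)
        linarith
      have f5 : 0 ≤ (m - 2) * (q - 1) := mul_nonneg (by omega) (by omega)
      have Tuv : Trel s P (((1 : ℤ), (-1 : ℤ)) : ℤ × ℤ) ((m - 1, 1) : ℤ × ℤ) := by
        apply hlt; simp only; omega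
      have Tuy : Trel s P (((1 : ℤ), (-1 : ℤ)) : ℤ × ℤ) ((p', q) : ℤ × ℤ) := by
        apply hlt; simp only; omega
      have Tvy : Trel s P ((m - 1, 1) : ℤ × ℤ) ((p', q) : ℤ × ℤ) := by
        apply hlt; simp only; omega
      have Tuvy : Trel s P (((1 : ℤ), (-1 : ℤ)) : ℤ × ℤ) (((m - 1, 1) : ℤ × ℤ) + ((p', q) : ℤ × ℤ)) := by
        apply prim2 hinv hSL hanti hpar hrel1 hrel2 N hlt _ _ (isCoprime_one_left)
        simp only [Prod.fst_add, Prod.snd_add]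
        omega
      have Tvuy : Trel s P ((m - 1, 1) : ℤ × ℤ) ((((1 : ℤ), (-1 : ℤ)) : ℤ × ℤ) + ((p', q) : ℤ × ℤ)) := by
        apply hlt; simp only [Prod.fst_add, Prod.snd_add]; omega
      have he : (((1 : ℤ), (-1 : ℤ)) : ℤ × ℤ).1 * ((m - 1, 1) : ℤ × ℤ).2
          - (((1 : ℤ), (-1 : ℤ)) : ℤ × ℤ).2 * ((m - 1, 1) : ℤ × ℤ).1 ≠ 0 := by
        simp only; omega
      have J := jacobi_step hinv he Tuv Tuy Tvy Tuvy Tvuy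
      have J' : Trel s P (m, (0 : ℤ)) ((p', q) : ℤ × ℤ) := by
        refine trel_congr ?_ rfl J
        ext
        · show 1 + (m - 1) = m
          ring
        · show -1 + 1 = (0 : ℤ)
          ring
      refine trel_congr rfl ?_ (trel_shift hSL t J')
      ext
      · show p' + t * q = p
        linarith [hp]
      · rfl

lemma master (hinv : ∀ k : ℤ, k ≠ 0 → IsUnit (brace s k))
    (hSL : ∀ a b c d : ℤ, a * d - b * c = 1 → ∃ φ : A ≃ₐ[R] A,
        ∀ x : ℤ × ℤ, φ (P x) = P (a * x.1 + b * x.2, c * x.1 + d * x.2))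
    (hanti : ∃ σ : A ≃ₗ[R] A, σ 1 = 1 ∧ (∀ u w : A, σ (u * w) = σ w * σ u) ∧
        ∀ a b : ℤ, σ (P (a, b)) = P (a, -b))
    (hpar : ∀ x : ℤ × ℤ, ∀ j k : ℤ,
        P (k • x) * P (j • x) - P (j • x) * P (k • x) = 0)
    (hrel1 : ∀ k : ℤ,
        P (1, 0) * P (-1, k) - P (-1, k) * P (1, 0) = brace s k • P (0, k))
    (hrel2 : ∀ k : ℤ,
        P (1, 0) * P (0, k) - P (0, k) * P (1, 0) = brace s k • P (1, k)) :
    ∀ N : ℕ, ∀ x y : ℤ × ℤ, (x.1 * y.2 - x.2 * y.1).natAbs ≤ N → Trel s P x y := by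
  intro N
  induction N using Nat.strong_induction_on with
  | _ N IH =>
  intro x y hN
  by_cases h0 : x.1 * y.2 - x.2 * y.1 = 0
  · exact trel_parallel hpar h0
  have hlt : ∀ x' y' : ℤ × ℤ, (x'.1 * y'.2 - x'.2 * y'.1).natAbs < N → Trel s P x' y' := by
    intro x' y' h
    exact IH _ h x' y' le_rfl
  have hx : x ≠ 0 := by
    rintro rfl
    simp at h0
  obtain ⟨m, z, hm, hcop, hxz⟩ := exists_prim x hx
  obtain ⟨g, g', hbez⟩ := hcop
  have hx1 : x.1 = m * z.1 := by rw [hxz]; simp [smul_eq_mul]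
  have hx2 : x.2 = m * z.2 := by rw [hxz]; simp [smul_eq_mul]
  set q0 : ℤ := z.1 * y.2 - z.2 * y.1 with hq0def
  have hdet : x.1 * y.2 - x.2 * y.1 = m * q0 := by rw [hx1, hx2, hq0def]; ring
  have hq0ne : q0 ≠ 0 := by
    rintro h
    rw [h, mul_zero] at hdet
    exact h0 hdet
  rw [hdet] at hN
  set p0 : ℤ := g * y.1 + g' * y.2 with hp0def
  have key : Trel s P ((m : ℤ), (0 : ℤ)) (p0, q0) := by
    rcases lt_or_gt_of_ne hq0ne with hneg | hpos
    · have hNq : m * (-q0) ≤ (N : ℤ) := by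
        have h1 : m * (-q0) = -(m * q0) := by ring
        have h2 : 0 ≤ m * (-q0) := mul_nonneg (by omega) (by omega)
        omega
      have C := core hinv hSL hanti hpar hrel1 hrel2 N hlt m p0 (-q0) hm (by omega) hNq
      have Rf := trel_reflect hanti C.swap
      exact trel_congr (by norm_num) (by norm_num) Rf
    · have hNq : m * q0 ≤ (N : ℤ) := by
        have h2 : 0 ≤ m * q0 := mul_nonneg (by omega) (by omega)
        omega
      exact core hinv hSL hanti hpar hrel1 hrel2 N hlt m p0 q0 hm (by omega) hNq
  have h2 := trel_transport hSL
    (show z.1 * g - (-g') * z.2 = 1 by linear_combination hbez) key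
  refine trel_congr ?_ ?_ h2
  · ext
    · show z.1 * m + -g' * 0 = x.1
      rw [hx1]; ring
    · show z.2 * m + g * 0 = x.2
      rw [hx2]; ring
  · ext
    · show z.1 * p0 + -g' * q0 = y.1
      rw [hp0def, hq0def]; linear_combination y.1 * hbez
    · show z.2 * p0 + g * q0 = y.2
      rw [hp0def, hq0def]; linear_combination y.2 * hbez

end Main4

theorem stmt_2 {R : Type*} [CommRing R] {A : Type*} [Ring A] [Algebra R A]
    (s : Rˣ) (hinv : ∀ k : ℤ, k ≠ 0 → IsUnit (brace s k))
    (P : ℤ × ℤ → A)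
    -- (i) each γ ∈ SL₂(ℤ) is implemented by an R-algebra automorphism permuting the P(x)
    (hSL : ∀ a b c d : ℤ, a * d - b * c = 1 → ∃ φ : A ≃ₐ[R] A,
        ∀ x : ℤ × ℤ, φ (P x) = P (a * x.1 + b * x.2, c * x.1 + d * x.2))
    -- (ii) an R-linear anti-automorphism σ with σ(P(a,b)) = P(a,−b)
    (hanti : ∃ σ : A ≃ₗ[R] A, σ 1 = 1 ∧ (∀ u w : A, σ (u * w) = σ w * σ u) ∧
        ∀ a b : ℤ, σ (P (a, b)) = P (a, -b))
    -- (iii) parallel elements commute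
    (hpar : ∀ x : ℤ × ℤ, ∀ j k : ℤ,
        P (k • x) * P (j • x) - P (j • x) * P (k • x) = 0)
    -- (iv)
    (hrel1 : ∀ k : ℤ,
        P (1, 0) * P (-1, k) - P (-1, k) * P (1, 0) = brace s k • P (0, k))
    -- (v)
    (hrel2 : ∀ k : ℤ,
        P (1, 0) * P (0, k) - P (0, k) * P (1, 0) = brace s k • P (1, k)) :
    ∀ x y : ℤ × ℤ,
      P x * P y - P y * P x = brace s (x.1 * y.2 - x.2 * y.1) • P (x + y) := by
  intro x y
  exact master hinv hSL hanti hpar hrel1 hrel2 (x.1 * y.2 - x.2 * y.1).natAbs x y le_rfl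
end

section
/- Let λ be a partition, identified with its Young diagram, the set of cells (i,j) ∈ ℤ² with 1 ≤ i and 1 ≤ j ≤ λ_i; the content of a cell (i,j) is c(i,j) = j − i. Call a cell y ∉ λ addable if λ ∪ {y} is again a Young diagram, and a cell x ∈ λ removable if λ ∖ {x} is again a Young diagram. Then the following identity holds in the Laurent polynomial ring ℤ[u, u^{−1}]: (sum over addable cells y of λ of u^{2c(y)}) − (sum over removable cells x of λ of u^{2c(x)}) = 1 + (u − u^{−1})² · (sum over cells z ∈ λ of u^{2c(z)}). -/
open LaurentPolynomial

namespace Stmt3Aux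

open Finset

/-- local predicate: `y` is an addable cell of `μ`. -/
def Pa (μ : YoungDiagram) (y : ℕ × ℕ) : Prop :=
  y ∉ μ ∧ (y.1 = 0 ∨ (y.1 - 1, y.2) ∈ μ) ∧ (y.2 = 0 ∨ (y.1, y.2 - 1) ∈ μ)

/-- local predicate: `x` is a removable cell of `μ`. -/
def Pr (μ : YoungDiagram) (x : ℕ × ℕ) : Prop :=
  x ∈ μ ∧ (x.1 + 1, x.2) ∉ μ ∧ (x.1, x.2 + 1) ∉ μ

instance (μ : YoungDiagram) : DecidablePred (Pa μ) := fun _ => by unfold Pa; infer_instance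
instance (μ : YoungDiagram) : DecidablePred (Pr μ) := fun _ => by unfold Pr; infer_instance

theorem addable_iff (μ : YoungDiagram) (y : ℕ × ℕ) :
    (y ∉ μ ∧ IsLowerSet (↑(insert y μ.cells) : Set (ℕ × ℕ))) ↔ Pa μ y := by
  obtain ⟨i, j⟩ := y
  constructor
  · rintro ⟨hy, hls⟩
    refine ⟨hy, ?_, ?_⟩
    · rcases Nat.eq_zero_or_pos i with h | h
      · exact Or.inl h
      · right
        have hmem : ((i - 1, j) : ℕ × ℕ) ∈ (↑(insert (i, j) μ.cells) : Set (ℕ × ℕ)) :=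
          hls (Prod.mk_le_mk.mpr ⟨Nat.sub_le _ _, le_refl _⟩) (by simp)
        simp only [Finset.coe_insert, Set.mem_insert_iff, Finset.mem_coe,
          YoungDiagram.mem_cells, Prod.mk.injEq] at hmem
        rcases hmem with ⟨h1, -⟩ | hmem
        · omega
        · exact hmem
    · rcases Nat.eq_zero_or_pos j with h | h
      · exact Or.inl h
      · right
        have hmem : ((i, j - 1) : ℕ × ℕ) ∈ (↑(insert (i, j) μ.cells) : Set (ℕ × ℕ)) :=
          hls (Prod.mk_le_mk.mpr ⟨le_refl _, Nat.sub_le _ _⟩) (by simp)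
        simp only [Finset.coe_insert, Set.mem_insert_iff, Finset.mem_coe,
          YoungDiagram.mem_cells, Prod.mk.injEq] at hmem
        rcases hmem with ⟨-, h2⟩ | hmem
        · omega
        · exact hmem
  · rintro ⟨hy, h1, h2⟩
    simp only at h1 h2
    refine ⟨hy, ?_⟩
    intro p q hqp hp
    obtain ⟨c, d⟩ := p
    obtain ⟨e, f⟩ := q
    obtain ⟨hle1, hle2⟩ := Prod.mk_le_mk.mp hqp
    simp only [Finset.coe_insert, Set.mem_insert_iff, Finset.mem_coe,
      YoungDiagram.mem_cells, Prod.mk.injEq] at hp ⊢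
    rcases hp with ⟨h3, h4⟩ | hp
    · -- (e, f) ≤ (c, d) = (i, j)
      by_cases hef : e = i ∧ f = j
      · exact Or.inl hef
      · right
        rcases Nat.lt_or_ge e i with he | he
        · rcases h1 with h1 | h1
          · omega
          · exact μ.up_left_mem (by omega) (by omega) h1
        · have hfj : f < j := by omega
          rcases h2 with h2 | h2
          · omega
          · exact μ.up_left_mem (by omega) (by omega) h2
    · exact Or.inr (μ.up_left_mem hle1 hle2 hp)

theorem removable_iff (μ : YoungDiagram) (x : ℕ × ℕ) :
    (x ∈ μ ∧ IsLowerSet (↑(μ.cells.erase x) : Set (ℕ × ℕ))) ↔ Pr μ x := by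
  obtain ⟨a, b⟩ := x
  constructor
  · rintro ⟨hx, hls⟩
    refine ⟨hx, ?_, ?_⟩
    · intro hmem
      have h1 : ((a + 1, b) : ℕ × ℕ) ∈ (↑(μ.cells.erase (a, b)) : Set (ℕ × ℕ)) := by
        simp only [Finset.coe_erase, Set.mem_diff, Finset.mem_coe, YoungDiagram.mem_cells,
          Set.mem_singleton_iff, Prod.mk.injEq]
        exact ⟨hmem, by omega⟩
      have h2 := hls (Prod.mk_le_mk.mpr ⟨Nat.le_succ _, le_refl _⟩) h1
      simp only [Finset.coe_erase, Set.mem_diff, Set.mem_singleton_iff] at h2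
      exact h2.2 trivial
    · intro hmem
      have h1 : ((a, b + 1) : ℕ × ℕ) ∈ (↑(μ.cells.erase (a, b)) : Set (ℕ × ℕ)) := by
        simp only [Finset.coe_erase, Set.mem_diff, Finset.mem_coe, YoungDiagram.mem_cells,
          Set.mem_singleton_iff, Prod.mk.injEq]
        exact ⟨hmem, by omega⟩
      have h2 := hls (Prod.mk_le_mk.mpr ⟨le_refl _, Nat.le_succ _⟩) h1
      simp only [Finset.coe_erase, Set.mem_diff, Set.mem_singleton_iff] at h2
      exact h2.2 trivial
  · rintro ⟨hx, h1, h2⟩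
    simp only at h1 h2
    refine ⟨hx, ?_⟩
    intro p q hqp hp
    obtain ⟨c, d⟩ := p
    obtain ⟨e, f⟩ := q
    obtain ⟨hle1, hle2⟩ := Prod.mk_le_mk.mp hqp
    simp only [Finset.coe_erase, Set.mem_diff, Finset.mem_coe, YoungDiagram.mem_cells,
      Set.mem_singleton_iff, Prod.mk.injEq] at hp ⊢
    obtain ⟨hpμ, hpx⟩ := hp
    refine ⟨μ.up_left_mem hle1 hle2 hpμ, ?_⟩
    rintro ⟨rfl, rfl⟩
    rcases Nat.lt_or_ge e c with h | h
    · exact h1 (μ.up_left_mem (by omega) hle2 hpμ)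
    · have : f < d := by omega
      exact h2 (μ.up_left_mem (by omega) (by omega) hpμ)


/-- a box containing the cells, the addable and the removable cells of `μ`. -/
def box (μ : YoungDiagram) : Finset (ℕ × ℕ) :=
  Finset.range (μ.colLen 0 + 1) ×ˢ Finset.range (μ.rowLen 0 + 1)

theorem mem_box {μ : YoungDiagram} {y : ℕ × ℕ} :
    y ∈ box μ ↔ y.1 < μ.colLen 0 + 1 ∧ y.2 < μ.rowLen 0 + 1 := by
  simp [box, Finset.mem_product]

theorem cells_subset_box (μ : YoungDiagram) : μ.cells ⊆ box μ := by
  intro y hy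
  rw [YoungDiagram.mem_cells] at hy
  obtain ⟨i, j⟩ := y
  rw [mem_box]
  constructor
  · have h1 := YoungDiagram.mem_iff_lt_colLen.mp hy
    have h2 := μ.colLen_anti 0 j (Nat.zero_le _)
    simp only; omega
  · have h1 := YoungDiagram.mem_iff_lt_rowLen.mp hy
    have h2 := μ.rowLen_anti 0 i (Nat.zero_le _)
    simp only; omega

theorem Pa_mem_box {ν μ : YoungDiagram} (hsub : ν.cells ⊆ μ.cells) {y : ℕ × ℕ}
    (h : Pa ν y) : y ∈ box μ := by
  obtain ⟨i, j⟩ := y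
  obtain ⟨-, h1, h2⟩ := h
  simp only at h1 h2
  rw [mem_box]
  constructor
  · rcases h1 with h1 | h1
    · simp only; omega
    · have hm : ((i - 1, j) : ℕ × ℕ) ∈ μ := by
        rw [← YoungDiagram.mem_cells] at h1 ⊢; exact hsub h1
      have hb := (cells_subset_box μ) (YoungDiagram.mem_cells _ |>.mpr hm)
      rw [mem_box] at hb
      simp only at hb ⊢
      rcases Nat.eq_zero_or_pos i with h | h
      · omega
      · have h1' := YoungDiagram.mem_iff_lt_colLen.mp hm
        have h2' := μ.colLen_anti 0 j (Nat.zero_le _)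
        omega
  · rcases h2 with h2 | h2
    · simp only; omega
    · have hm : ((i, j - 1) : ℕ × ℕ) ∈ μ := by
        rw [← YoungDiagram.mem_cells] at h2 ⊢; exact hsub h2
      rcases Nat.eq_zero_or_pos j with h | h
      · simp only; omega
      · have h1' := YoungDiagram.mem_iff_lt_rowLen.mp hm
        have h2' := μ.rowLen_anti 0 i (Nat.zero_le _)
        simp only; omega

theorem Pr_mem_box {ν μ : YoungDiagram} (hsub : ν.cells ⊆ μ.cells) {y : ℕ × ℕ}
    (h : Pr ν y) : y ∈ box μ :=
  cells_subset_box μ (hsub (YoungDiagram.mem_cells _ |>.mpr h.1))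

/-- the canonical finset of addable cells. -/
def addables (μ : YoungDiagram) : Finset (ℕ × ℕ) := (box μ).filter (Pa μ)

/-- the canonical finset of removable cells. -/
def removables (μ : YoungDiagram) : Finset (ℕ × ℕ) := (box μ).filter (Pr μ)

theorem mem_addables {μ : YoungDiagram} {y : ℕ × ℕ} : y ∈ addables μ ↔ Pa μ y := by
  simp only [addables, Finset.mem_filter, and_iff_right_iff_imp]
  exact Pa_mem_box (le_refl _)

theorem mem_removables {μ : YoungDiagram} {y : ℕ × ℕ} : y ∈ removables μ ↔ Pr μ y := by
  simp only [removables, Finset.mem_filter, and_iff_right_iff_imp]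
  exact Pr_mem_box (le_refl _)

theorem sum_addables {ν μ : YoungDiagram} (hsub : ν.cells ⊆ μ.cells)
    (f : ℕ × ℕ → LaurentPolynomial ℤ) :
    ∑ y ∈ addables ν, f y = ∑ y ∈ box μ, if Pa ν y then f y else 0 := by
  rw [← Finset.sum_filter]
  apply Finset.sum_congr _ (fun _ _ => rfl)
  ext y
  simp only [Finset.mem_filter]
  constructor
  · intro h
    have := mem_addables.mp h
    exact ⟨Pa_mem_box hsub this, this⟩
  · intro h
    exact mem_addables.mpr h.2

theorem sum_removables {ν μ : YoungDiagram} (hsub : ν.cells ⊆ μ.cells)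
    (f : ℕ × ℕ → LaurentPolynomial ℤ) :
    ∑ y ∈ removables ν, f y = ∑ y ∈ box μ, if Pr ν y then f y else 0 := by
  rw [← Finset.sum_filter]
  apply Finset.sum_congr _ (fun _ _ => rfl)
  ext y
  simp only [Finset.mem_filter]
  constructor
  · intro h
    have := mem_removables.mp h
    exact ⟨Pr_mem_box hsub this, this⟩
  · intro h
    exact mem_removables.mpr h.2


/-- erase a removable cell from a Young diagram. -/
def eraseYD (μ : YoungDiagram) (x : ℕ × ℕ) (h : Pr μ x) : YoungDiagram :=
  ⟨μ.cells.erase x, ((removable_iff μ x).mpr h).2⟩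

theorem mem_eraseYD {μ : YoungDiagram} {x : ℕ × ℕ} {h : Pr μ x} {y : ℕ × ℕ} :
    y ∈ eraseYD μ x h ↔ y ∈ μ ∧ y ≠ x := by
  have h0 : y ∈ eraseYD μ x h ↔ y ∈ (eraseYD μ x h).cells := (YoungDiagram.mem_cells _).symm
  rw [h0]
  show y ∈ μ.cells.erase x ↔ _
  rw [Finset.mem_erase, YoungDiagram.mem_cells, and_comm]

theorem Pa_mk {μ : YoungDiagram} {i j : ℕ} :
    Pa μ (i, j) ↔ ((i, j) ∉ μ ∧ (i = 0 ∨ (i - 1, j) ∈ μ) ∧ (j = 0 ∨ (i, j - 1) ∈ μ)) :=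
  Iff.rfl

theorem Pr_mk {μ : YoungDiagram} {i j : ℕ} :
    Pr μ (i, j) ↔ ((i, j) ∈ μ ∧ (i + 1, j) ∉ μ ∧ (i, j + 1) ∉ μ) :=
  Iff.rfl

section Transfer

variable {μ : YoungDiagram} {a b : ℕ}

theorem Pa_erase_iff (h : Pr μ (a, b)) {i j : ℕ} (h1 : (i, j) ≠ ((a, b) : ℕ × ℕ))
    (h3 : (i, j) ≠ ((a + 1, b) : ℕ × ℕ)) (h2 : (i, j) ≠ ((a, b + 1) : ℕ × ℕ)) :
    Pa (eraseYD μ (a, b) h) (i, j) ↔ Pa μ (i, j) := by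
  simp only [Pa_mk, mem_eraseYD]
  constructor
  · rintro ⟨hy, hu, hl⟩
    exact ⟨fun hm => hy ⟨hm, h1⟩, hu.imp id And.left, hl.imp id And.left⟩
  · rintro ⟨hy, hu, hl⟩
    refine ⟨fun hm => hy hm.1, ?_, ?_⟩
    · rcases hu with hu | hu
      · exact Or.inl hu
      · rcases Nat.eq_zero_or_pos i with hi | hi
        · exact Or.inl hi
        · refine Or.inr ⟨hu, fun he => h3 ?_⟩
          simp only [Prod.mk.injEq] at he ⊢
          omega
    · rcases hl with hl | hl
      · exact Or.inl hl
      · rcases Nat.eq_zero_or_pos j with hj | hj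
        · exact Or.inl hj
        · refine Or.inr ⟨hl, fun he => h2 ?_⟩
          simp only [Prod.mk.injEq] at he ⊢
          omega

theorem Pr_erase_iff (h : Pr μ (a, b)) {i j : ℕ} (h1 : (i, j) ≠ ((a, b) : ℕ × ℕ))
    (h4 : ¬(i + 1 = a ∧ j = b)) (h5 : ¬(i = a ∧ j + 1 = b)) :
    Pr (eraseYD μ (a, b) h) (i, j) ↔ Pr μ (i, j) := by
  simp only [Pr_mk, mem_eraseYD]
  constructor
  · rintro ⟨⟨hm, -⟩, hr, hd⟩
    refine ⟨hm, fun hc => hr ⟨hc, fun he => ?_⟩, fun hc => hd ⟨hc, fun he => ?_⟩⟩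
    · simp only [Prod.mk.injEq] at he
      exact h4 he
    · simp only [Prod.mk.injEq] at he
      exact h5 he
  · rintro ⟨hm, hr, hd⟩
    exact ⟨⟨hm, h1⟩, fun hc => hr hc.1, fun hc => hd hc.1⟩

-- values at the cell x = (a, b) itself
theorem Pa_erase_self (h : Pr μ (a, b)) : Pa (eraseYD μ (a, b) h) (a, b) := by
  rw [Pa_mk]
  refine ⟨?_, ?_, ?_⟩
  · rw [mem_eraseYD]; rintro ⟨-, hne⟩; exact hne rfl
  · rcases Nat.eq_zero_or_pos a with ha | ha
    · exact Or.inl ha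
    · refine Or.inr (mem_eraseYD.mpr ⟨μ.up_left_mem (Nat.sub_le _ _) le_rfl h.1, ?_⟩)
      simp only [ne_eq, Prod.mk.injEq, not_and]
      omega
  · rcases Nat.eq_zero_or_pos b with hb | hb
    · exact Or.inl hb
    · refine Or.inr (mem_eraseYD.mpr ⟨μ.up_left_mem le_rfl (Nat.sub_le _ _) h.1, ?_⟩)
      simp only [ne_eq, Prod.mk.injEq, not_and]
      omega

theorem not_Pa_self (h : Pr μ (a, b)) : ¬ Pa μ (a, b) := fun hp => hp.1 h.1

theorem not_Pr_erase_self (h : Pr μ (a, b)) : ¬ Pr (eraseYD μ (a, b) h) (a, b) :=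
  fun hp => (mem_eraseYD.mp hp.1).2 rfl

-- values at (a, b+1)
theorem Pa_mu_right (h : Pr μ (a, b)) : Pa μ (a, b + 1) ↔ (a = 0 ∨ (a - 1, b + 1) ∈ μ) :=
  ⟨fun hp => hp.2.1, fun hc => ⟨h.2.2, hc, Or.inr h.1⟩⟩

theorem not_Pa_erase_right (h : Pr μ (a, b)) : ¬ Pa (eraseYD μ (a, b) h) (a, b + 1) := by
  intro hp
  rcases hp.2.2 with hc | hc
  · exact Nat.succ_ne_zero _ hc
  · exact (mem_eraseYD.mp hc).2 rfl

theorem not_Pr_mu_right (h : Pr μ (a, b)) : ¬ Pr μ (a, b + 1) := fun hp => h.2.2 hp.1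

theorem not_Pr_erase_right (h : Pr μ (a, b)) : ¬ Pr (eraseYD μ (a, b) h) (a, b + 1) :=
  fun hp => h.2.2 (mem_eraseYD.mp hp.1).1

-- values at (a+1, b)
theorem Pa_mu_down (h : Pr μ (a, b)) : Pa μ (a + 1, b) ↔ (b = 0 ∨ (a + 1, b - 1) ∈ μ) :=
  ⟨fun hp => hp.2.2, fun hc => ⟨h.2.1, Or.inr h.1, hc⟩⟩

theorem not_Pa_erase_down (h : Pr μ (a, b)) : ¬ Pa (eraseYD μ (a, b) h) (a + 1, b) := by
  intro hp
  rcases hp.2.1 with hc | hc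
  · exact Nat.succ_ne_zero _ hc
  · exact (mem_eraseYD.mp hc).2 rfl

theorem not_Pr_mu_down (h : Pr μ (a, b)) : ¬ Pr μ (a + 1, b) := fun hp => h.2.1 hp.1

theorem not_Pr_erase_down (h : Pr μ (a, b)) : ¬ Pr (eraseYD μ (a, b) h) (a + 1, b) :=
  fun hp => h.2.1 (mem_eraseYD.mp hp.1).1

-- values at (a-1, b), for 1 ≤ a
theorem not_Pa_mu_r1 (h : Pr μ (a, b)) : ¬ Pa μ (a - 1, b) :=
  fun hp => hp.1 (μ.up_left_mem (Nat.sub_le _ _) le_rfl h.1)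

theorem not_Pa_erase_r1 (h : Pr μ (a, b)) (ha : 1 ≤ a) :
    ¬ Pa (eraseYD μ (a, b) h) (a - 1, b) := by
  intro hp
  refine hp.1 (mem_eraseYD.mpr ⟨μ.up_left_mem (Nat.sub_le _ _) le_rfl h.1, ?_⟩)
  simp only [ne_eq, Prod.mk.injEq, not_and]
  omega

theorem not_Pr_mu_r1 (h : Pr μ (a, b)) (ha : 1 ≤ a) : ¬ Pr μ (a - 1, b) := by
  intro hp
  apply hp.2.1
  show (a - 1 + 1, b) ∈ μ
  rw [show a - 1 + 1 = a from by omega]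
  exact h.1

theorem Pr_erase_r1 (h : Pr μ (a, b)) (ha : 1 ≤ a) :
    Pr (eraseYD μ (a, b) h) (a - 1, b) ↔ (a - 1, b + 1) ∉ μ := by
  constructor
  · intro hp hc
    refine hp.2.2 (mem_eraseYD.mpr ⟨hc, ?_⟩)
    simp only [ne_eq, Prod.mk.injEq, not_and]
    omega
  · intro hc
    refine ⟨mem_eraseYD.mpr ⟨μ.up_left_mem (Nat.sub_le _ _) le_rfl h.1, ?_⟩, ?_, ?_⟩
    · simp only [ne_eq, Prod.mk.injEq, not_and]
      omega
    · intro hm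
      refine (mem_eraseYD.mp hm).2 ?_
      simp
      omega
    · intro hm
      exact hc (mem_eraseYD.mp hm).1

-- values at (a, b-1), for 1 ≤ b
theorem not_Pa_mu_r2 (h : Pr μ (a, b)) : ¬ Pa μ (a, b - 1) :=
  fun hp => hp.1 (μ.up_left_mem le_rfl (Nat.sub_le _ _) h.1)

theorem not_Pa_erase_r2 (h : Pr μ (a, b)) (hb : 1 ≤ b) :
    ¬ Pa (eraseYD μ (a, b) h) (a, b - 1) := by
  intro hp
  refine hp.1 (mem_eraseYD.mpr ⟨μ.up_left_mem le_rfl (Nat.sub_le _ _) h.1, ?_⟩)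
  simp only [ne_eq, Prod.mk.injEq, not_and]
  omega

theorem not_Pr_mu_r2 (h : Pr μ (a, b)) (hb : 1 ≤ b) : ¬ Pr μ (a, b - 1) := by
  intro hp
  apply hp.2.2
  show (a, b - 1 + 1) ∈ μ
  rw [show b - 1 + 1 = b from by omega]
  exact h.1

theorem Pr_erase_r2 (h : Pr μ (a, b)) (hb : 1 ≤ b) :
    Pr (eraseYD μ (a, b) h) (a, b - 1) ↔ (a + 1, b - 1) ∉ μ := by
  constructor
  · intro hp hc
    refine hp.2.1 (mem_eraseYD.mpr ⟨hc, ?_⟩)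
    simp only [ne_eq, Prod.mk.injEq, not_and]
    omega
  · intro hc
    refine ⟨mem_eraseYD.mpr ⟨μ.up_left_mem le_rfl (Nat.sub_le _ _) h.1, ?_⟩, ?_, ?_⟩
    · simp only [ne_eq, Prod.mk.injEq, not_and]
      omega
    · intro hm
      exact hc (mem_eraseYD.mp hm).1
    · intro hm
      refine (mem_eraseYD.mp hm).2 ?_
      simp
      omega

theorem Gzero (h : Pr μ (a, b)) (f : ℕ × ℕ → LaurentPolynomial ℤ) {y : ℕ × ℕ}
    (h1 : y ≠ ((a, b) : ℕ × ℕ)) (h2 : y ≠ ((a, b + 1) : ℕ × ℕ))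
    (h3 : y ≠ ((a + 1, b) : ℕ × ℕ))
    (h4 : ¬(y.1 + 1 = a ∧ y.2 = b)) (h5 : ¬(y.1 = a ∧ y.2 + 1 = b)) :
    ((if Pa μ y then f y else 0) - (if Pr μ y then f y else 0))
      - ((if Pa (eraseYD μ (a, b) h) y then f y else 0)
        - (if Pr (eraseYD μ (a, b) h) y then f y else 0)) = 0 := by
  obtain ⟨i, j⟩ := y
  simp only [Pa_erase_iff h h1 h3 h2, Pr_erase_iff h h1 h4 h5]
  ring

end Transfer

theorem key_T (d : ℤ) :
    (T (d + 2) : LaurentPolynomial ℤ) - 2 * T d + T (d - 2) = (T 1 - T (-1)) ^ 2 * T d := by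
  have h2 : (T (d + 2) : LaurentPolynomial ℤ) = T 2 * T d := by
    rw [← T_add]; ring_nf
  have hm2 : (T (d - 2) : LaurentPolynomial ℤ) = T (-2) * T d := by
    rw [← T_add]; ring_nf
  have e1 : (T 1 : LaurentPolynomial ℤ) * T 1 = T 2 := by rw [← T_add]; norm_num
  have e2 : (T 1 : LaurentPolynomial ℤ) * T (-1) = 1 := by
    rw [← T_add]; norm_num [T_zero]
  have e3 : (T (-1) : LaurentPolynomial ℤ) * T (-1) = T (-2) := by
    rw [← T_add]; norm_num
  rw [h2, hm2]
  linear_combination (2 * e2 - e1 - e3) * T d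


set_option maxHeartbeats 1000000 in
theorem main (μ : YoungDiagram) :
    (∑ y ∈ addables μ, (T (2 * ((y.2 : ℤ) - (y.1 : ℤ))) : LaurentPolynomial ℤ))
      - ∑ x ∈ removables μ, (T (2 * ((x.2 : ℤ) - (x.1 : ℤ))) : LaurentPolynomial ℤ)
    = 1 + (T 1 - T (-1)) ^ 2
        * ∑ z ∈ μ.cells, (T (2 * ((z.2 : ℤ) - (z.1 : ℤ))) : LaurentPolynomial ℤ) := by
  generalize hn : μ.cells.card = n
  induction n generalizing μ with
  | zero =>
    have hcells : μ.cells = ∅ := Finset.card_eq_zero.mp hn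
    have hmem : ∀ y : ℕ × ℕ, y ∉ μ := by
      intro y hy
      rw [← YoungDiagram.mem_cells, hcells] at hy
      exact absurd hy (Finset.notMem_empty _)
    have haddables : addables μ = {((0, 0) : ℕ × ℕ)} := by
      ext y
      rw [mem_addables]
      obtain ⟨i, j⟩ := y
      simp only [Finset.mem_singleton, Pa_mk, Prod.mk.injEq]
      constructor
      · rintro ⟨-, h1, h2⟩
        rcases h1 with h1 | h1
        · rcases h2 with h2 | h2
          · exact ⟨h1, h2⟩
          · exact absurd h2 (hmem _)
        · exact absurd h1 (hmem _)
      · rintro ⟨rfl, rfl⟩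
        exact ⟨hmem _, Or.inl rfl, Or.inl rfl⟩
    have hremovables : removables μ = ∅ := by
      ext y
      rw [mem_removables]
      simp only [Finset.notMem_empty, iff_false]
      exact fun hp => hmem y hp.1
    rw [haddables, hremovables, hcells]
    norm_num [T_zero]
  | succ n ih =>
    have hne : μ.cells.Nonempty := Finset.card_pos.mp (by omega)
    obtain ⟨x, hxmem, hxmax⟩ := μ.cells.exists_maximal hne
    obtain ⟨a, b⟩ := x
    have hxμ : (a, b) ∈ μ := (YoungDiagram.mem_cells _).mp hxmem
    have h : Pr μ (a, b) := by
      refine ⟨hxμ, ?_, ?_⟩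
      · intro hc
        have hlt : ((a, b) : ℕ × ℕ) < (a + 1, b) :=
          Prod.mk_lt_mk.mpr (Or.inl ⟨Nat.lt_succ_self _, le_rfl⟩)
        exact lt_irrefl _ (lt_of_lt_of_le hlt (hxmax ((YoungDiagram.mem_cells _).mpr hc) hlt.le))
      · intro hc
        have hlt : ((a, b) : ℕ × ℕ) < (a, b + 1) :=
          Prod.mk_lt_mk.mpr (Or.inr ⟨le_rfl, Nat.lt_succ_self _⟩)
        exact lt_irrefl _ (lt_of_lt_of_le hlt (hxmax ((YoungDiagram.mem_cells _).mpr hc) hlt.le))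
    set μ' := eraseYD μ (a, b) h with hμ'
    have hsub : μ'.cells ⊆ μ.cells := Finset.erase_subset _ _
    have hcard : μ'.cells.card = n := by
      show (μ.cells.erase (a, b)).card = n
      rw [Finset.card_erase_of_mem hxmem, hn]
      omega
    have ih' := ih μ' hcard
    have hsum : (∑ z ∈ μ.cells, (T (2 * ((z.2 : ℤ) - (z.1 : ℤ))) : LaurentPolynomial ℤ))
        = (∑ z ∈ μ'.cells, (T (2 * ((z.2 : ℤ) - (z.1 : ℤ))) : LaurentPolynomial ℤ))
          + T (2 * ((b : ℤ) - (a : ℤ))) := by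
      have h0 := Finset.sum_erase_add μ.cells
        (fun z : ℕ × ℕ => (T (2 * ((z.2 : ℤ) - (z.1 : ℤ))) : LaurentPolynomial ℤ)) hxmem
      exact h0.symm
    suffices hkey :
        ((∑ y ∈ addables μ, (T (2 * ((y.2 : ℤ) - (y.1 : ℤ))) : LaurentPolynomial ℤ))
          - ∑ y ∈ removables μ, (T (2 * ((y.2 : ℤ) - (y.1 : ℤ))) : LaurentPolynomial ℤ))
        - ((∑ y ∈ addables μ', (T (2 * ((y.2 : ℤ) - (y.1 : ℤ))) : LaurentPolynomial ℤ))
          - ∑ y ∈ removables μ', (T (2 * ((y.2 : ℤ) - (y.1 : ℤ))) : LaurentPolynomial ℤ))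
        = (T 1 - T (-1)) ^ 2 * T (2 * ((b : ℤ) - (a : ℤ))) by
      linear_combination hkey + ih' - ((T 1 - T (-1) : LaurentPolynomial ℤ)) ^ 2 * hsum
    rw [sum_addables (Finset.Subset.refl μ.cells), sum_removables (Finset.Subset.refl μ.cells),
      sum_addables hsub, sum_removables hsub,
      ← Finset.sum_sub_distrib, ← Finset.sum_sub_distrib, ← Finset.sum_sub_distrib]
    rw [hμ']
    have hxbox : ((a, b) : ℕ × ℕ) ∈ box μ := cells_subset_box μ hxmem
    have hxb := mem_box.mp hxbox
    have hcol : a < μ.colLen 0 :=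
      lt_of_lt_of_le (YoungDiagram.mem_iff_lt_colLen.mp hxμ) (μ.colLen_anti 0 b (Nat.zero_le _))
    have hrow : b < μ.rowLen 0 :=
      lt_of_lt_of_le (YoungDiagram.mem_iff_lt_rowLen.mp hxμ) (μ.rowLen_anti 0 a (Nat.zero_le _))
    have hb1 : ((a, b + 1) : ℕ × ℕ) ∈ box μ :=
      mem_box.mpr ⟨by show a < _; omega, by show b + 1 < _; omega⟩
    have hb2 : ((a + 1, b) : ℕ × ℕ) ∈ box μ :=
      mem_box.mpr ⟨by show a + 1 < _; omega, by show b < _; omega⟩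
    have hb3 : ((a - 1, b) : ℕ × ℕ) ∈ box μ :=
      mem_box.mpr ⟨by show a - 1 < _; omega, by show b < _; omega⟩
    have hb4 : ((a, b - 1) : ℕ × ℕ) ∈ box μ :=
      mem_box.mpr ⟨by show a < _; omega, by show b - 1 < _; omega⟩
    rcases Nat.eq_zero_or_pos a with ha | ha
    · rcases Nat.eq_zero_or_pos b with hb | hb
      · -- a = 0, b = 0
        have hK : ({((a, b) : ℕ × ℕ), (a, b + 1), (a + 1, b)} : Finset (ℕ × ℕ)) ⊆ box μ := by
          intro y hy
          simp only [Finset.mem_insert, Finset.mem_singleton] at hy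
          rcases hy with rfl | rfl | rfl
          · exact hxbox
          · exact hb1
          · exact hb2
        have hzero : ∀ y ∈ box μ, y ∉ ({((a, b) : ℕ × ℕ), (a, b + 1), (a + 1, b)} : Finset (ℕ × ℕ)) →
            ((if Pa μ y then (T (2 * ((y.2 : ℤ) - (y.1 : ℤ))) : LaurentPolynomial ℤ) else 0)
              - (if Pr μ y then (T (2 * ((y.2 : ℤ) - (y.1 : ℤ))) : LaurentPolynomial ℤ) else 0))
            - ((if Pa (eraseYD μ (a, b) h) y then (T (2 * ((y.2 : ℤ) - (y.1 : ℤ))) : LaurentPolynomial ℤ) else 0)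
              - (if Pr (eraseYD μ (a, b) h) y then (T (2 * ((y.2 : ℤ) - (y.1 : ℤ))) : LaurentPolynomial ℤ) else 0)) = 0 := by
          rintro ⟨i, j⟩ - hyK
          simp only [Finset.mem_insert, Finset.mem_singleton, Prod.mk.injEq, not_or] at hyK
          refine Gzero (y := (i, j)) h (fun y => (T (2 * ((y.2 : ℤ) - (y.1 : ℤ))) : LaurentPolynomial ℤ)) ?_ ?_ ?_ ?_ ?_
          · simp only [ne_eq, Prod.mk.injEq, not_and]
            omega
          · simp only [ne_eq, Prod.mk.injEq, not_and]
            omega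
          · simp only [ne_eq, Prod.mk.injEq, not_and]
            omega
          · show ¬(i + 1 = a ∧ j = b)
            omega
          · show ¬(i = a ∧ j + 1 = b)
            omega
        rw [← Finset.sum_subset hK hzero]
        rw [Finset.sum_insert (by simp only [Finset.mem_insert, Finset.mem_singleton, Prod.mk.injEq, not_or, not_and]; omega)]
        rw [Finset.sum_insert (by simp only [Finset.mem_insert, Finset.mem_singleton, Prod.mk.injEq, not_or, not_and]; omega)]
        rw [Finset.sum_singleton]
        rw [if_neg (not_Pa_self h), if_pos h, if_pos (Pa_erase_self h), if_neg (not_Pr_erase_self h)]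
        rw [if_pos ((Pa_mu_right h).mpr (Or.inl ha)), if_neg (not_Pr_mu_right h),
          if_neg (not_Pa_erase_right h), if_neg (not_Pr_erase_right h)]
        rw [if_pos ((Pa_mu_down h).mpr (Or.inl hb)), if_neg (not_Pr_mu_down h),
          if_neg (not_Pa_erase_down h), if_neg (not_Pr_erase_down h)]
        have hk := key_T (2 * ((b : ℤ) - (a : ℤ)))
        push_cast
        ring_nf
        ring_nf at hk
        linear_combination hk
      · -- a = 0, 1 ≤ b
        have hK : ({((a, b) : ℕ × ℕ), (a, b + 1), (a + 1, b), (a, b - 1)} : Finset (ℕ × ℕ)) ⊆ box μ := by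
          intro y hy
          simp only [Finset.mem_insert, Finset.mem_singleton] at hy
          rcases hy with rfl | rfl | rfl | rfl
          · exact hxbox
          · exact hb1
          · exact hb2
          · exact hb4
        have hzero : ∀ y ∈ box μ, y ∉ ({((a, b) : ℕ × ℕ), (a, b + 1), (a + 1, b), (a, b - 1)} : Finset (ℕ × ℕ)) →
            ((if Pa μ y then (T (2 * ((y.2 : ℤ) - (y.1 : ℤ))) : LaurentPolynomial ℤ) else 0)
              - (if Pr μ y then (T (2 * ((y.2 : ℤ) - (y.1 : ℤ))) : LaurentPolynomial ℤ) else 0))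
            - ((if Pa (eraseYD μ (a, b) h) y then (T (2 * ((y.2 : ℤ) - (y.1 : ℤ))) : LaurentPolynomial ℤ) else 0)
              - (if Pr (eraseYD μ (a, b) h) y then (T (2 * ((y.2 : ℤ) - (y.1 : ℤ))) : LaurentPolynomial ℤ) else 0)) = 0 := by
          rintro ⟨i, j⟩ - hyK
          simp only [Finset.mem_insert, Finset.mem_singleton, Prod.mk.injEq, not_or] at hyK
          refine Gzero (y := (i, j)) h (fun y => (T (2 * ((y.2 : ℤ) - (y.1 : ℤ))) : LaurentPolynomial ℤ)) ?_ ?_ ?_ ?_ ?_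
          · simp only [ne_eq, Prod.mk.injEq, not_and]
            omega
          · simp only [ne_eq, Prod.mk.injEq, not_and]
            omega
          · simp only [ne_eq, Prod.mk.injEq, not_and]
            omega
          · show ¬(i + 1 = a ∧ j = b)
            omega
          · show ¬(i = a ∧ j + 1 = b)
            omega
        rw [← Finset.sum_subset hK hzero]
        rw [Finset.sum_insert (by simp only [Finset.mem_insert, Finset.mem_singleton, Prod.mk.injEq, not_or, not_and]; omega)]
        rw [Finset.sum_insert (by simp only [Finset.mem_insert, Finset.mem_singleton, Prod.mk.injEq, not_or, not_and]; omega)]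
        rw [Finset.sum_insert (by simp only [Finset.mem_insert, Finset.mem_singleton, Prod.mk.injEq, not_or, not_and]; omega)]
        rw [Finset.sum_singleton]
        rw [if_neg (not_Pa_self h), if_pos h, if_pos (Pa_erase_self h), if_neg (not_Pr_erase_self h)]
        rw [if_pos ((Pa_mu_right h).mpr (Or.inl ha)), if_neg (not_Pr_mu_right h),
          if_neg (not_Pa_erase_right h), if_neg (not_Pr_erase_right h)]
        rw [if_neg (not_Pa_mu_r2 h), if_neg (not_Pr_mu_r2 h hb), if_neg (not_Pa_erase_r2 h hb)]
        by_cases hm2 : (a + 1, b - 1) ∈ μ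
        · rw [if_pos ((Pa_mu_down h).mpr (Or.inr hm2)), if_neg (not_Pr_mu_down h),
            if_neg (not_Pa_erase_down h), if_neg (not_Pr_erase_down h),
            if_neg (fun hp => (Pr_erase_r2 h hb).mp hp hm2)]
          have hk := key_T (2 * ((b : ℤ) - (a : ℤ)))
          push_cast [Nat.cast_sub hb]
          ring_nf
          ring_nf at hk
          linear_combination hk
        · rw [if_neg (fun hp => Or.elim ((Pa_mu_down h).mp hp) (fun hc => by omega) hm2),
            if_neg (not_Pr_mu_down h), if_neg (not_Pa_erase_down h), if_neg (not_Pr_erase_down h),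
            if_pos ((Pr_erase_r2 h hb).mpr hm2)]
          have hk := key_T (2 * ((b : ℤ) - (a : ℤ)))
          push_cast [Nat.cast_sub hb]
          ring_nf
          ring_nf at hk
          linear_combination hk
    · rcases Nat.eq_zero_or_pos b with hb | hb
      · -- 1 ≤ a, b = 0
        have hK : ({((a, b) : ℕ × ℕ), (a, b + 1), (a + 1, b), (a - 1, b)} : Finset (ℕ × ℕ)) ⊆ box μ := by
          intro y hy
          simp only [Finset.mem_insert, Finset.mem_singleton] at hy
          rcases hy with rfl | rfl | rfl | rfl
          · exact hxbox
          · exact hb1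
          · exact hb2
          · exact hb3
        have hzero : ∀ y ∈ box μ, y ∉ ({((a, b) : ℕ × ℕ), (a, b + 1), (a + 1, b), (a - 1, b)} : Finset (ℕ × ℕ)) →
            ((if Pa μ y then (T (2 * ((y.2 : ℤ) - (y.1 : ℤ))) : LaurentPolynomial ℤ) else 0)
              - (if Pr μ y then (T (2 * ((y.2 : ℤ) - (y.1 : ℤ))) : LaurentPolynomial ℤ) else 0))
            - ((if Pa (eraseYD μ (a, b) h) y then (T (2 * ((y.2 : ℤ) - (y.1 : ℤ))) : LaurentPolynomial ℤ) else 0)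
              - (if Pr (eraseYD μ (a, b) h) y then (T (2 * ((y.2 : ℤ) - (y.1 : ℤ))) : LaurentPolynomial ℤ) else 0)) = 0 := by
          rintro ⟨i, j⟩ - hyK
          simp only [Finset.mem_insert, Finset.mem_singleton, Prod.mk.injEq, not_or] at hyK
          refine Gzero (y := (i, j)) h (fun y => (T (2 * ((y.2 : ℤ) - (y.1 : ℤ))) : LaurentPolynomial ℤ)) ?_ ?_ ?_ ?_ ?_
          · simp only [ne_eq, Prod.mk.injEq, not_and]
            omega
          · simp only [ne_eq, Prod.mk.injEq, not_and]
            omega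
          · simp only [ne_eq, Prod.mk.injEq, not_and]
            omega
          · show ¬(i + 1 = a ∧ j = b)
            omega
          · show ¬(i = a ∧ j + 1 = b)
            omega
        rw [← Finset.sum_subset hK hzero]
        rw [Finset.sum_insert (by simp only [Finset.mem_insert, Finset.mem_singleton, Prod.mk.injEq, not_or, not_and]; omega)]
        rw [Finset.sum_insert (by simp only [Finset.mem_insert, Finset.mem_singleton, Prod.mk.injEq, not_or, not_and]; omega)]
        rw [Finset.sum_insert (by simp only [Finset.mem_insert, Finset.mem_singleton, Prod.mk.injEq, not_or, not_and]; omega)]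
        rw [Finset.sum_singleton]
        rw [if_neg (not_Pa_self h), if_pos h, if_pos (Pa_erase_self h), if_neg (not_Pr_erase_self h)]
        rw [if_pos ((Pa_mu_down h).mpr (Or.inl hb)), if_neg (not_Pr_mu_down h),
          if_neg (not_Pa_erase_down h), if_neg (not_Pr_erase_down h)]
        rw [if_neg (not_Pa_mu_r1 h), if_neg (not_Pr_mu_r1 h ha), if_neg (not_Pa_erase_r1 h ha)]
        by_cases hm1 : (a - 1, b + 1) ∈ μ
        · rw [if_pos ((Pa_mu_right h).mpr (Or.inr hm1)), if_neg (not_Pr_mu_right h),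
            if_neg (not_Pa_erase_right h), if_neg (not_Pr_erase_right h),
            if_neg (fun hp => (Pr_erase_r1 h ha).mp hp hm1)]
          have hk := key_T (2 * ((b : ℤ) - (a : ℤ)))
          push_cast [Nat.cast_sub ha]
          ring_nf
          ring_nf at hk
          linear_combination hk
        · rw [if_neg (fun hp => Or.elim ((Pa_mu_right h).mp hp) (fun hc => by omega) hm1),
            if_neg (not_Pr_mu_right h), if_neg (not_Pa_erase_right h), if_neg (not_Pr_erase_right h),
            if_pos ((Pr_erase_r1 h ha).mpr hm1)]
          have hk := key_T (2 * ((b : ℤ) - (a : ℤ)))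
          push_cast [Nat.cast_sub ha]
          ring_nf
          ring_nf at hk
          linear_combination hk
      · -- 1 ≤ a, 1 ≤ b
        have hK : ({((a, b) : ℕ × ℕ), (a, b + 1), (a + 1, b), (a - 1, b), (a, b - 1)} : Finset (ℕ × ℕ)) ⊆ box μ := by
          intro y hy
          simp only [Finset.mem_insert, Finset.mem_singleton] at hy
          rcases hy with rfl | rfl | rfl | rfl | rfl
          · exact hxbox
          · exact hb1
          · exact hb2
          · exact hb3
          · exact hb4
        have hzero : ∀ y ∈ box μ, y ∉ ({((a, b) : ℕ × ℕ), (a, b + 1), (a + 1, b), (a - 1, b), (a, b - 1)} : Finset (ℕ × ℕ)) →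
            ((if Pa μ y then (T (2 * ((y.2 : ℤ) - (y.1 : ℤ))) : LaurentPolynomial ℤ) else 0)
              - (if Pr μ y then (T (2 * ((y.2 : ℤ) - (y.1 : ℤ))) : LaurentPolynomial ℤ) else 0))
            - ((if Pa (eraseYD μ (a, b) h) y then (T (2 * ((y.2 : ℤ) - (y.1 : ℤ))) : LaurentPolynomial ℤ) else 0)
              - (if Pr (eraseYD μ (a, b) h) y then (T (2 * ((y.2 : ℤ) - (y.1 : ℤ))) : LaurentPolynomial ℤ) else 0)) = 0 := by
          rintro ⟨i, j⟩ - hyK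
          simp only [Finset.mem_insert, Finset.mem_singleton, Prod.mk.injEq, not_or] at hyK
          refine Gzero (y := (i, j)) h (fun y => (T (2 * ((y.2 : ℤ) - (y.1 : ℤ))) : LaurentPolynomial ℤ)) ?_ ?_ ?_ ?_ ?_
          · simp only [ne_eq, Prod.mk.injEq, not_and]
            omega
          · simp only [ne_eq, Prod.mk.injEq, not_and]
            omega
          · simp only [ne_eq, Prod.mk.injEq, not_and]
            omega
          · show ¬(i + 1 = a ∧ j = b)
            omega
          · show ¬(i = a ∧ j + 1 = b)
            omega
        rw [← Finset.sum_subset hK hzero]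
        rw [Finset.sum_insert (by simp only [Finset.mem_insert, Finset.mem_singleton, Prod.mk.injEq, not_or, not_and]; omega)]
        rw [Finset.sum_insert (by simp only [Finset.mem_insert, Finset.mem_singleton, Prod.mk.injEq, not_or, not_and]; omega)]
        rw [Finset.sum_insert (by simp only [Finset.mem_insert, Finset.mem_singleton, Prod.mk.injEq, not_or, not_and]; omega)]
        rw [Finset.sum_insert (by simp only [Finset.mem_insert, Finset.mem_singleton, Prod.mk.injEq, not_or, not_and]; omega)]
        rw [Finset.sum_singleton]
        rw [if_neg (not_Pa_self h), if_pos h, if_pos (Pa_erase_self h), if_neg (not_Pr_erase_self h)]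
        rw [if_neg (not_Pa_mu_r1 h), if_neg (not_Pr_mu_r1 h ha), if_neg (not_Pa_erase_r1 h ha)]
        rw [if_neg (not_Pa_mu_r2 h), if_neg (not_Pr_mu_r2 h hb), if_neg (not_Pa_erase_r2 h hb)]
        by_cases hm2 : (a + 1, b - 1) ∈ μ
        · rw [if_pos ((Pa_mu_down h).mpr (Or.inr hm2)), if_neg (not_Pr_mu_down h),
            if_neg (not_Pa_erase_down h), if_neg (not_Pr_erase_down h),
            if_neg (fun hp => (Pr_erase_r2 h hb).mp hp hm2)]
          by_cases hm1 : (a - 1, b + 1) ∈ μ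
          · rw [if_pos ((Pa_mu_right h).mpr (Or.inr hm1)), if_neg (not_Pr_mu_right h),
              if_neg (not_Pa_erase_right h), if_neg (not_Pr_erase_right h),
              if_neg (fun hp => (Pr_erase_r1 h ha).mp hp hm1)]
            have hk := key_T (2 * ((b : ℤ) - (a : ℤ)))
            push_cast [Nat.cast_sub ha, Nat.cast_sub hb]
            ring_nf
            ring_nf at hk
            linear_combination hk
          · rw [if_neg (fun hp => Or.elim ((Pa_mu_right h).mp hp) (fun hc => by omega) hm1),
              if_neg (not_Pr_mu_right h), if_neg (not_Pa_erase_right h), if_neg (not_Pr_erase_right h),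
              if_pos ((Pr_erase_r1 h ha).mpr hm1)]
            have hk := key_T (2 * ((b : ℤ) - (a : ℤ)))
            push_cast [Nat.cast_sub ha, Nat.cast_sub hb]
            ring_nf
            ring_nf at hk
            linear_combination hk
        · rw [if_neg (fun hp => Or.elim ((Pa_mu_down h).mp hp) (fun hc => by omega) hm2),
            if_neg (not_Pr_mu_down h), if_neg (not_Pa_erase_down h), if_neg (not_Pr_erase_down h),
            if_pos ((Pr_erase_r2 h hb).mpr hm2)]
          by_cases hm1 : (a - 1, b + 1) ∈ μ
          · rw [if_pos ((Pa_mu_right h).mpr (Or.inr hm1)), if_neg (not_Pr_mu_right h),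
              if_neg (not_Pa_erase_right h), if_neg (not_Pr_erase_right h),
              if_neg (fun hp => (Pr_erase_r1 h ha).mp hp hm1)]
            have hk := key_T (2 * ((b : ℤ) - (a : ℤ)))
            push_cast [Nat.cast_sub ha, Nat.cast_sub hb]
            ring_nf
            ring_nf at hk
            linear_combination hk
          · rw [if_neg (fun hp => Or.elim ((Pa_mu_right h).mp hp) (fun hc => by omega) hm1),
              if_neg (not_Pr_mu_right h), if_neg (not_Pa_erase_right h), if_neg (not_Pr_erase_right h),
              if_pos ((Pr_erase_r1 h ha).mpr hm1)]
            have hk := key_T (2 * ((b : ℤ) - (a : ℤ)))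
            push_cast [Nat.cast_sub ha, Nat.cast_sub hb]
            ring_nf
            ring_nf at hk
            linear_combination hk


end Stmt3Aux

theorem stmt_3 (μ : YoungDiagram) (Add Rem : Finset (ℕ × ℕ))
    -- `Add` is the set of addable cells of μ
    (hAdd : ∀ y : ℕ × ℕ,
      y ∈ Add ↔ y ∉ μ ∧ IsLowerSet (↑(insert y μ.cells) : Set (ℕ × ℕ)))
    -- `Rem` is the set of removable cells of μ
    (hRem : ∀ x : ℕ × ℕ,
      x ∈ Rem ↔ x ∈ μ ∧ IsLowerSet (↑(μ.cells.erase x) : Set (ℕ × ℕ))) :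
    (∑ y ∈ Add, (T (2 * ((y.2 : ℤ) - (y.1 : ℤ))) : LaurentPolynomial ℤ))
      - ∑ x ∈ Rem, (T (2 * ((x.2 : ℤ) - (x.1 : ℤ))) : LaurentPolynomial ℤ)
    = 1 + (T 1 - T (-1)) ^ 2
        * ∑ z ∈ μ.cells, (T (2 * ((z.2 : ℤ) - (z.1 : ℤ))) : LaurentPolynomial ℤ) := by
  have hA : Add = Stmt3Aux.addables μ := by
    ext y
    rw [hAdd y, Stmt3Aux.mem_addables]
    exact Stmt3Aux.addable_iff μ y
  have hR : Rem = Stmt3Aux.removables μ := by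
    ext y
    rw [hRem y, Stmt3Aux.mem_removables]
    exact Stmt3Aux.removable_iff μ y
  rw [hA, hR]
  exact Stmt3Aux.main μ
end

section
/- Let λ ⊆ γ be Young diagrams such that θ := γ ∖ λ is a border strip (nonempty, edge-connected, containing no 2×2 square of cells) with |θ| ≥ 2, and let x ∈ θ be the (unique) cell of θ of maximal content c(i,j) = j − i. Then exactly one of the following holds: (a) λ ∪ {x} is a Young diagram; (b) γ ∖ {x} is a Young diagram. -/
/-- Two cells share an edge. -/
def EdgeAdjacent (a b : ℕ × ℕ) : Prop :=
  (a.1 = b.1 ∧ (a.2 + 1 = b.2 ∨ b.2 + 1 = a.2)) ∨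
  (a.2 = b.2 ∧ (a.1 + 1 = b.1 ∨ b.1 + 1 = a.1))

/-- The content of a cell. -/
def cellContent (x : ℕ × ℕ) : ℤ := (x.2 : ℤ) - (x.1 : ℤ)

theorem stmt_6 (lam gam : YoungDiagram) (hsub : lam ≤ gam)
    (θ : Finset (ℕ × ℕ)) (hθ : θ = gam.cells \ lam.cells)
    -- θ is a border strip with at least 2 cells:
    (hcard : 2 ≤ θ.card)
    (hconn : ∀ a ∈ θ, ∀ b ∈ θ,
      Relation.ReflTransGen (fun x y => x ∈ θ ∧ y ∈ θ ∧ EdgeAdjacent x y) a b)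
    (hsq : ¬ ∃ i j : ℕ,
      (i, j) ∈ θ ∧ (i + 1, j) ∈ θ ∧ (i, j + 1) ∈ θ ∧ (i + 1, j + 1) ∈ θ)
    -- x is the cell of θ of maximal content
    (x : ℕ × ℕ) (hx : x ∈ θ)
    (hmax : ∀ y ∈ θ, cellContent y ≤ cellContent x) :
    Xor' (IsLowerSet (↑(insert x lam.cells) : Set (ℕ × ℕ)))
         (IsLowerSet (↑(gam.cells.erase x) : Set (ℕ × ℕ))) := by
  obtain ⟨i, j⟩ := x
  have hmemθ : ∀ a : ℕ × ℕ, a ∈ θ ↔ a ∈ gam ∧ a ∉ lam := by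
    intro a; rw [hθ, Finset.mem_sdiff, gam.mem_cells, lam.mem_cells]
  have hxg : (i, j) ∈ gam := ((hmemθ _).1 hx).1
  have hxl : (i, j) ∉ lam := ((hmemθ _).1 hx).2
  -- cells weakly above-right of x are not in lam
  have hul : ∀ a b : ℕ, i ≤ a → j ≤ b → (a, b) ∉ lam :=
    fun a b ha hb h => hxl (lam.up_left_mem ha hb h)
  -- cells of content > c(x) are not in θ
  have hcont : ∀ a b : ℕ, (j : ℤ) - i < (b : ℤ) - a → (a, b) ∉ θ := by
    intro a b hlt h
    have := hmax _ h
    simp only [cellContent] at this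
    omega
  -- neighbors of x in θ are below or to the left
  have hnb : ∀ y ∈ θ, EdgeAdjacent (i, j) y →
      y = (i + 1, j) ∨ ∃ j₀, j₀ + 1 = j ∧ y = (i, j₀) := by
    rintro ⟨a, b⟩ hy hadj
    rcases hadj with ⟨h1, h2 | h2⟩ | ⟨h1, h2 | h2⟩ <;> simp only [] at h1 h2
    · exact absurd hy (hcont a b (by omega))
    · exact Or.inr ⟨b, h2, by simp [← h1]⟩
    · exact Or.inl (by simp [← h1, ← h2])
    · exact absurd hy (hcont a b (by omega))
  -- existence of a neighbor
  have hone : (i + 1, j) ∈ θ ∨ ∃ j₀, j₀ + 1 = j ∧ (i, j₀) ∈ θ := by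
    obtain ⟨y, hy, hyne⟩ := Finset.exists_mem_ne (s := θ) (by omega) (i, j)
    rcases (hconn _ hx _ hy).cases_head with heq | ⟨n, ⟨_, hn2, hadj⟩, _⟩
    · exact absurd heq.symm hyne
    · rcases hnb n hn2 hadj with h | ⟨j₀, hj₀, rfl⟩
      · exact Or.inl (h ▸ hn2)
      · exact Or.inr ⟨j₀, hj₀, hn2⟩
  -- not both
  have hnotboth : ¬ ((i + 1, j) ∈ θ ∧ ∃ j₀, j₀ + 1 = j ∧ (i, j₀) ∈ θ) := by
    rintro ⟨hb, j₀, hj₀, hl⟩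
    subst hj₀
    have hbg : (i + 1, j₀ + 1) ∈ gam := ((hmemθ _).1 hb).1
    have h1 : (i + 1, j₀) ∈ θ := by
      refine (hmemθ _).2 ⟨gam.up_left_mem le_rfl (by omega) hbg, fun h => ?_⟩
      exact ((hmemθ _).1 hl).2 (lam.up_left_mem (by omega) le_rfl h)
    exact hsq ⟨i, j₀, hl, h1, hx, hb⟩
  -- neighbors strictly above/right of x are not in gam means...
  rcases hone with hbel | ⟨j₀, hj₀, hleft⟩
  · -- below in θ: insert is lower, erase is not
    have hleftn : ∀ j₀, j₀ + 1 = j → (i, j₀) ∉ θ := by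
      intro j₀ hj₀ h; exact hnotboth ⟨hbel, j₀, hj₀, h⟩
    left
    constructor
    · -- insert is a lower set
      intro a b hba ha
      rw [Finset.mem_coe, Finset.mem_insert] at ha ⊢
      rcases ha with rfl | ha
      · -- a = (i,j), b ≤ (i,j)
        by_cases hbx : b = (i, j)
        · exact Or.inl hbx
        right
        obtain ⟨b1, b2⟩ := b
        obtain ⟨h1, h2⟩ := Prod.mk_le_mk.1 hba
        have hne : b1 < i ∨ b2 < j := by
          rcases lt_or_eq_of_le h1 with h | rfl
          · exact Or.inl h
          rcases lt_or_eq_of_le h2 with h | rfl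
          · exact Or.inr h
          · exact absurd rfl hbx
        rcases hne with h | h
        · -- use (i-1, j) ∈ lam
          have hi : 1 ≤ i := by omega
          have hg : (i - 1, j) ∈ gam := gam.up_left_mem (by omega) le_rfl hxg
          have hnθ : (i - 1, j) ∉ θ := hcont _ _ (by omega)
          have hla : (i - 1, j) ∈ lam := by
            by_contra hc; exact hnθ ((hmemθ _).2 ⟨hg, hc⟩)
          exact lam.up_left_mem (by omega) h2 hla
        · -- use (i, j-1) ∈ lam
          have hg : (i, j - 1) ∈ gam := gam.up_left_mem le_rfl (by omega) hxg
          have hnθ : (i, j - 1) ∉ θ := hleftn (j - 1) (by omega)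
          have hla : (i, j - 1) ∈ lam := by
            by_contra hc; exact hnθ ((hmemθ _).2 ⟨hg, hc⟩)
          exact lam.up_left_mem h1 (show b2 ≤ j - 1 by omega) hla
      · exact Or.inr ((lam.mem_cells _).1
          (lam.isLowerSet hba ((lam.mem_cells _).2 ha)))
    · -- erase is not a lower set
      intro hlow
      have hbg : (i + 1, j) ∈ gam := ((hmemθ _).1 hbel).1
      have hmem : (i + 1, j) ∈ (↑(gam.cells.erase (i, j)) : Set (ℕ × ℕ)) := by
        rw [Finset.mem_coe, Finset.mem_erase]
        exact ⟨by simp, (gam.mem_cells _).2 hbg⟩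
      have := hlow (show ((i, j) : ℕ × ℕ) ≤ (i + 1, j) from Prod.mk_le_mk.2 ⟨by omega, le_rfl⟩) hmem
      rw [Finset.mem_coe, Finset.mem_erase] at this
      exact this.1 rfl
  · -- left in θ: erase is lower, insert is not
    subst hj₀
    have hbeln : (i + 1, j₀ + 1) ∉ θ := fun h => hnotboth ⟨h, j₀, rfl, hleft⟩
    right
    constructor
    · -- erase is a lower set
      intro a b hba ha
      rw [Finset.mem_coe, Finset.mem_erase] at ha ⊢
      obtain ⟨hane, hag⟩ := ha
      have hbg : b ∈ gam.cells := gam.isLowerSet hba hag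
      refine ⟨fun hbx => ?_, hbg⟩
      subst hbx
      -- (i, j₀+1) ≤ a, a ∈ gam, a ≠ (i, j₀+1)
      obtain ⟨a1, a2⟩ := a
      obtain ⟨h1, h2⟩ := Prod.mk_le_mk.1 hba
      have hne : i < a1 ∨ j₀ + 1 < a2 := by
        rcases lt_or_eq_of_le h1 with h | rfl
        · exact Or.inl h
        rcases lt_or_eq_of_le h2 with h | rfl
        · exact Or.inr h
        · exact absurd rfl hane
      rcases hne with h | h
      · -- then (i+1, j₀+1) ∈ gam hence in θ, contradiction
        have hg : (i + 1, j₀ + 1) ∈ gam :=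
          gam.up_left_mem (by omega) h2 ((gam.mem_cells _).1 hag)
        exact hbeln ((hmemθ _).2 ⟨hg, hul _ _ (by omega) le_rfl⟩)
      · -- then (i, j₀+2) ∈ gam hence in θ, content too big
        have hg : (i, j₀ + 2) ∈ gam :=
          gam.up_left_mem h1 (by omega) ((gam.mem_cells _).1 hag)
        exact hcont i (j₀ + 2) (by omega)
          ((hmemθ _).2 ⟨hg, hul _ _ le_rfl (by omega)⟩)
    · -- insert is not a lower set
      intro hlow
      have hmem : ((i, j₀ + 1) : ℕ × ℕ) ∈ (↑(insert (i, j₀ + 1) lam.cells) : Set (ℕ × ℕ)) := by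
        rw [Finset.mem_coe]; exact Finset.mem_insert_self _ _
      have := hlow (Prod.mk_le_mk.2 ⟨le_rfl, by omega⟩ :
        ((i, j₀) : ℕ × ℕ) ≤ (i, j₀ + 1)) hmem
      rw [Finset.mem_coe, Finset.mem_insert] at this
      rcases this with h | h
      · simp at h
      · exact ((hmemθ _).1 hleft).2 ((lam.mem_cells _).1 h)
end

section
/- Let K = ℚ(q) be the field of rational functions in one variable q over ℚ, and let B be the commutative ring obtained from the Laurent polynomial ring K[t, t^{−1}] by adjoining countably many polynomial indeterminates u_1, u_2, u_3, … . For each integer r ≥ 1 set α_r := (1 − q^r)(1 − t^{−r})(1 − q^{−r}t^r)/r ∈ B. Define elements θ_n ∈ B for n ≥ 1 by the identity of formal power series in a variable z over B: 1 + Σ_{n≥1} θ_n zⁿ = exp(Σ_{r≥1} α_r u_r z^r), where exp(f) := Σ_{m≥0} f^m/m! for a power series f with zero constant term. Then for every n ≥ 1, the element θ_n − [n]²·α_1·u_n lies in the ideal of B generated by (t − q)², where [n]² := (qⁿ − 2 + q^{−n})/(q − 2 + q^{−1}) ∈ K. -/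
noncomputable section

/-- The field `K = ℚ(q)`. -/
abbrev KK : Type := RatFunc ℚ

/-- The ring `B`: Laurent polynomials in `t` over `K`, with countably many
polynomial indeterminates `u_1, u_2, …` adjoined. -/
abbrev BB : Type := MvPolynomial ℕ (LaurentPolynomial KK)

/-- The element `q ∈ K`. -/
def qq : KK := RatFunc.X

open LaurentPolynomial

/-- `α_r = (1 − q^r)(1 − t^{−r})(1 − q^{−r}t^r)/r ∈ K[t,t⁻¹] ⊆ B`. -/
def alphaE (r : ℕ) : LaurentPolynomial KK :=
  C ((r : KK)⁻¹) *
    ((1 - C (qq ^ r)) * (1 - T (-(r : ℤ))) * (1 - C (qq ^ (-(r : ℤ))) * T (r : ℤ)))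

/-- The power series `f = Σ_{r ≥ 1} α_r u_r z^r` over `B` (zero constant term). -/
def fSer : PowerSeries BB :=
  PowerSeries.mk fun r =>
    if r = 0 then 0 else MvPolynomial.C (alphaE r) * MvPolynomial.X r

/-- `θ_n`, the coefficient of `zⁿ` in `exp(f) = Σ_{m ≥ 0} f^m / m!`.  Since `f` has zero
constant term, `coeff n (f^m) = 0` for `m > n`, so the sum may be truncated at `m = n`,
and the coefficient of `z⁰` is `1`, i.e. `exp(f) = 1 + Σ_{n ≥ 1} θ_n zⁿ`. -/
def thetaE (n : ℕ) : BB :=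
  ∑ m ∈ Finset.range (n + 1),
    (m.factorial : ℚ)⁻¹ • PowerSeries.coeff n (fSer ^ m)

/-- `[n]² = (qⁿ − 2 + q^{−n})/(q − 2 + q^{−1}) ∈ K`. -/
def qint_sq (n : ℕ) : KK :=
  (qq ^ n - 2 + qq ^ (-(n : ℤ))) / (qq - 2 + qq⁻¹)

lemma qq_ne_zero : qq ≠ 0 := RatFunc.X_ne_zero

lemma qq_ne_one : qq ≠ 1 := by
  rw [qq, ← RatFunc.algebraMap_X (K := ℚ), ← map_one (algebraMap (Polynomial ℚ) KK)]
  intro h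
  have h2 := RatFunc.algebraMap_injective ℚ h
  rw [← Polynomial.C_1] at h2
  exact Polynomial.X_ne_C 1 h2

lemma denom_ne : qq - 2 + qq⁻¹ ≠ 0 := by
  intro h
  have h2 : qq * (qq - 2 + qq⁻¹) = (qq - 1) ^ 2 := by
    rw [mul_add, mul_sub, mul_inv_cancel₀ qq_ne_zero]
    ring
  rw [h, mul_zero] at h2
  have h3 : qq - 1 = 0 := pow_eq_zero_iff (n := 2) (by norm_num) |>.mp h2.symm
  exact qq_ne_one (by linear_combination h3)

def Pp (r : ℕ) : Polynomial KK :=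
  (1 + Polynomial.C (qq ^ (-(r : ℤ)))) * Polynomial.X ^ r
    - Polynomial.C (qq ^ (-(r : ℤ))) * Polynomial.X ^ (2 * r) - 1

lemma toLaurent_Pp (r : ℕ) : (Pp r).toLaurent
    = (1 + C (qq ^ (-(r : ℤ)))) * T (r : ℤ) - C (qq ^ (-(r : ℤ))) * T (r : ℤ) ^ 2 - 1 := by
  simp only [Pp, map_sub, map_add, map_mul, map_one, Polynomial.toLaurent_C,
    Polynomial.toLaurent_X_pow]
  rw [show ((2 * r : ℕ) : ℤ) = (2 : ℕ) * (r : ℤ) by push_cast; ring, ← T_pow]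

lemma alphaE_eq (r : ℕ) : alphaE r =
    C ((r : KK)⁻¹ * (1 - qq ^ r)) * (T (-(r : ℤ)) * (Pp r).toLaurent) := by
  have h : (T (-(r : ℤ)) : LaurentPolynomial KK) * T (r : ℤ) = 1 := by
    rw [← T_add]; simp
  rw [alphaE, toLaurent_Pp, map_mul, map_sub, map_one]
  linear_combination (C ((r : KK))⁻¹ * (1 - C (qq ^ r)) *
    (C (qq ^ (-(r : ℤ))) * T (r : ℤ) - 1)) * h

lemma sq_dvd_of_isRoot {p : Polynomial KK} {a : KK} (h1 : p.IsRoot a)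
    (h2 : p.derivative.IsRoot a) : (Polynomial.X - Polynomial.C a) ^ 2 ∣ p := by
  obtain ⟨g, hg⟩ := (Polynomial.dvd_iff_isRoot (p := p) (a := a)).mpr h1
  have hgroot : g.IsRoot a := by
    have h3 := h2
    rw [hg] at h3
    simpa [Polynomial.IsRoot, Polynomial.derivative_mul] using h3
  obtain ⟨k, hk⟩ := (Polynomial.dvd_iff_isRoot (p := g) (a := a)).mpr hgroot
  exact ⟨k, by rw [hg, hk]; ring⟩

lemma zpow_neg_nat (r : ℕ) : qq ^ (-(r : ℤ)) = (qq ^ r)⁻¹ := by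
  rw [zpow_neg, zpow_natCast]

lemma Pp_isRoot (r : ℕ) : (Pp r).IsRoot qq := by
  have hp : qq ^ r ≠ 0 := pow_ne_zero _ qq_ne_zero
  simp only [Pp, Polynomial.IsRoot, Polynomial.eval_sub, Polynomial.eval_add,
    Polynomial.eval_mul, Polynomial.eval_one, Polynomial.eval_C, Polynomial.eval_pow,
    Polynomial.eval_X, zpow_neg_nat]
  rw [pow_mul']
  field_simp
  ring

lemma deriv_Pp_eval (s : ℕ) : (Pp (s + 1)).derivative.eval qq
    = ((s : KK) + 1) * qq ^ s * (qq ^ (-((s : ℤ) + 1)) - 1) := by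
  have hp : qq ^ (s + 1) ≠ 0 := pow_ne_zero _ qq_ne_zero
  have h2 : 2 * (s + 1) = (2 * s + 1) + 1 := by ring
  simp only [Pp, h2, Polynomial.derivative_sub, Polynomial.derivative_mul, Polynomial.derivative_add,
    Polynomial.derivative_one, Polynomial.derivative_C, Polynomial.derivative_X_pow,
    Polynomial.eval_sub, Polynomial.eval_add, Polynomial.eval_mul, Polynomial.eval_one,
    Polynomial.eval_C, Polynomial.eval_pow, Polynomial.eval_X, Polynomial.eval_natCast,
    zero_mul, mul_zero, add_zero, zero_add, sub_zero]
  rw [show (-((s : ℤ) + 1)) = -(((s+1 : ℕ) : ℤ)) by push_cast; ring, zpow_neg_nat]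
  push_cast
  field_simp
  ring


/-- The combined polynomial whose double root at `q` encodes Lemma B. -/
def Qpoly (n : ℕ) : Polynomial KK :=
  Polynomial.C ((n : KK)⁻¹ * (1 - qq ^ n)) * Pp n
    - Polynomial.C (qint_sq n * (((1 : ℕ) : KK)⁻¹ * (1 - qq ^ 1))) *
        (Polynomial.X ^ (n - 1) * Pp 1)

lemma key_laurent (n : ℕ) (hn : 1 ≤ n) :
    alphaE n - C (qint_sq n) * alphaE 1 = T (-(n : ℤ)) * (Qpoly n).toLaurent := by
  obtain ⟨m, rfl⟩ : ∃ m, n = m + 1 := ⟨n - 1, by omega⟩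
  have hT : (T (-(((m + 1 : ℕ)) : ℤ)) : LaurentPolynomial KK) * T ((m : ℕ) : ℤ)
      = T (-(((1 : ℕ)) : ℤ)) := by
    rw [← T_add]; congr 1; push_cast; ring
  rw [alphaE_eq, alphaE_eq, Qpoly]
  simp only [map_sub, map_mul, Polynomial.toLaurent_C, Polynomial.toLaurent_X_pow,
    Nat.add_sub_cancel]
  linear_combination (C (qint_sq (m + 1)) * (C ((((1:ℕ) : KK))⁻¹) * (C (1:KK) - C (qq ^ 1))) *
    (Pp 1).toLaurent) * hT

lemma Qpoly_dvd (n : ℕ) (hn : 1 ≤ n) :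
    (Polynomial.X - Polynomial.C qq) ^ 2 ∣ Qpoly n := by
  obtain ⟨m, rfl⟩ : ∃ m, n = m + 1 := ⟨n - 1, by omega⟩
  apply sq_dvd_of_isRoot
  · simp only [Qpoly, Polynomial.IsRoot, Polynomial.eval_sub, Polynomial.eval_mul,
      Polynomial.eval_pow, Polynomial.eval_C, Polynomial.eval_X,
      (Pp_isRoot (m + 1)).eq_zero, (Pp_isRoot 1).eq_zero, mul_zero, sub_zero]
  · have hq := qq_ne_zero
    have hd := denom_ne
    haveI : CharZero KK := charZero_of_injective_algebraMap (algebraMap ℚ KK).injective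
    have hn1 : ((m : KK) + 1) ≠ 0 := by
      have h : ((m + 1 : ℕ) : KK) ≠ 0 := Nat.cast_ne_zero.mpr (Nat.succ_ne_zero m)
      push_cast at h; exact h
    simp only [Qpoly, Polynomial.IsRoot, Polynomial.derivative_sub,
      Polynomial.derivative_mul, Polynomial.derivative_C, Polynomial.derivative_X_pow,
      Nat.add_sub_cancel, Polynomial.eval_sub, Polynomial.eval_add, Polynomial.eval_mul,
      Polynomial.eval_C, Polynomial.eval_pow, Polynomial.eval_X, Polynomial.eval_natCast,
      zero_mul, zero_add, (Pp_isRoot 1).eq_zero, (Pp_isRoot (m+1)).eq_zero, mul_zero]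
    have hq1 : qq - 1 ≠ 0 := sub_ne_zero.mpr qq_ne_one
    have hd1 := deriv_Pp_eval m
    have hd2 := deriv_Pp_eval 0
    norm_num at hd2
    push_cast at hd1 hd2 ⊢
    rw [show qq ^ (-((m:ℤ)+1)) = (qq ^ (m+1))⁻¹ by
      rw [show (-((m:ℤ)+1)) = -(((m+1:ℕ)):ℤ) by push_cast; ring, zpow_neg_nat]] at hd1
    rw [hd1, hd2]
    have hqint : qint_sq (m+1) = (qq^(m+1) - 1)^2 / (qq^m * (qq-1)^2) := by
      rw [qint_sq, zpow_neg_nat]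
      rw [div_eq_div_iff hd (mul_ne_zero (pow_ne_zero _ hq) (pow_ne_zero _ hq1))]
      field_simp
      ring
    rw [hqint]
    field_simp
    ring

lemma alphaE_dvd (r : ℕ) : ((T 1 : LaurentPolynomial KK) - C qq) ∣ alphaE r := by
  rw [alphaE_eq]
  apply Dvd.dvd.mul_left
  apply Dvd.dvd.mul_left
  have h : (Polynomial.X - Polynomial.C qq) ∣ Pp r :=
    (Polynomial.dvd_iff_isRoot).mpr (Pp_isRoot r)
  have h2 := map_dvd (Polynomial.toLaurent (R := KK)) h
  simpa [Polynomial.toLaurent_X, Polynomial.toLaurent_C] using h2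

lemma key_dvd (n : ℕ) (hn : 1 ≤ n) :
    ((T 1 : LaurentPolynomial KK) - C qq) ^ 2 ∣ alphaE n - C (qint_sq n) * alphaE 1 := by
  rw [key_laurent n hn]
  apply Dvd.dvd.mul_left
  have h2 := map_dvd (Polynomial.toLaurent (R := KK)) (Qpoly_dvd n hn)
  simpa [Polynomial.toLaurent_X, Polynomial.toLaurent_C] using h2



lemma coeff_fSer_dvd (k : ℕ) :
    (MvPolynomial.C (T 1 - C qq) : BB) ∣ PowerSeries.coeff k fSer := by
  rw [fSer, PowerSeries.coeff_mk]
  split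
  · exact dvd_zero _
  · exact ((map_dvd (MvPolynomial.C (σ := ℕ)) (alphaE_dvd k)).mul_right _)

lemma coeff_pow_dvd (m : ℕ) : ∀ k : ℕ, 1 ≤ m →
    (MvPolynomial.C (T 1 - C qq) : BB) ∣ PowerSeries.coeff k (fSer ^ m) := by
  induction m with
  | zero => intro k h; omega
  | succ m ih =>
    intro k _
    rcases Nat.eq_zero_or_pos m with rfl | hm0
    · simpa using coeff_fSer_dvd k
    · rw [pow_succ, PowerSeries.coeff_mul]
      exact Finset.dvd_sum fun p _ => (ih p.1 (by omega)).mul_right _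

lemma coeff_pow_sq_dvd (m k : ℕ) (hm : 2 ≤ m) :
    (MvPolynomial.C (T 1 - C qq) : BB) ^ 2 ∣ PowerSeries.coeff k (fSer ^ m) := by
  obtain ⟨m', rfl⟩ : ∃ m', m = m' + 2 := ⟨m - 2, by omega⟩
  rw [show fSer ^ (m' + 2) = fSer ^ (m' + 1) * fSer by ring, PowerSeries.coeff_mul]
  refine Finset.dvd_sum fun p _ => ?_
  rw [sq]
  exact mul_dvd_mul (coeff_pow_dvd _ _ (by omega)) (coeff_fSer_dvd _)

theorem stmt_7 (n : ℕ) (hn : 1 ≤ n) :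
    thetaE n - MvPolynomial.C (C (qint_sq n) * alphaE 1) * MvPolynomial.X n
      ∈ Ideal.span {((MvPolynomial.C (T 1 - C qq) : BB)) ^ 2} := by
  rw [Ideal.mem_span_singleton]
  rw [thetaE, ← Finset.add_sum_erase _ _ (Finset.mem_range.mpr (by omega : 1 < n + 1))]
  have hg1 : ((Nat.factorial 1 : ℚ))⁻¹ • PowerSeries.coeff n (fSer ^ 1)
      = MvPolynomial.C (alphaE n) * MvPolynomial.X n := by
    simp only [Nat.factorial_one, Nat.cast_one, inv_one, one_smul, pow_one]
    rw [fSer, PowerSeries.coeff_mk, if_neg (by omega)]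
  rw [hg1, add_sub_right_comm]
  apply dvd_add
  · rw [← sub_mul, ← map_sub]
    have := map_dvd (MvPolynomial.C (σ := ℕ)) (key_dvd n hn)
    rw [map_pow] at this
    exact this.mul_right _
  · refine Finset.dvd_sum fun m hm => ?_
    rw [Finset.mem_erase, Finset.mem_range] at hm
    rw [Algebra.smul_def]
    apply Dvd.dvd.mul_left
    rcases Nat.eq_zero_or_pos m with rfl | hm0
    · rw [pow_zero, PowerSeries.coeff_one, if_neg (by omega)]
      exact dvd_zero _
    · exact coeff_pow_sq_dvd m n (by omega)
end
end
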